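/- arXiv:0905.4176 — 4 statements merged into one kernel-verified Lean document; each statement's English description precedes it below -/
import Mathlib

section
/- Semigroup Grönwall comparison: Let v ∈ C²(ℝ) be positive with v, v′, v″ of at most polynomial growth, and suppose Lv(x) ≤ A₁ v(x) for all x ∈ ℝ, where L = (1/4)d²/dx² − (x/2)d/dx and A₁ ≥ 0. Then for every s ≥ 0 and every x ∈ ℝ, (e^{sL}v)(x) ≤ e^{sA₁} v(x), where e^{sL} is the Ornstein–Uhlenbeck (Mehler) semigroup. -/
open MeasureTheory

/-- The Ornstein–Uhlenbeck generator `L = (1/4)d²/dx² − (x/2)d/dx`. -/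
noncomputable def OUgen (f : ℝ → ℝ) : ℝ → ℝ := fun x =>
  (1 / 4) * deriv (deriv f) x - (x / 2) * deriv f x

/-- The Ornstein–Uhlenbeck (Mehler) semigroup `e^{tL}`:
`(e^{tL}f)(x) = (2π)^{−1/2} ∫ f(e^{−t/2}x + √((1−e^{−t})/2)·ξ) e^{−ξ²/2} dξ`. -/
noncomputable def mehler (t : ℝ) (f : ℝ → ℝ) : ℝ → ℝ := fun x =>
  (2 * Real.pi) ^ (-(1 : ℝ) / 2) *
    ∫ ξ : ℝ, f (Real.exp (-t / 2) * x + Real.sqrt ((1 - Real.exp (-t)) / 2) * ξ) *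
      Real.exp (-ξ ^ 2 / 2)


open Real Filter Topology

lemma gauss_poly_int (n : ℕ) :
    Integrable (fun ξ : ℝ => (1 + ξ ^ 2) ^ n * Real.exp (-ξ ^ 2 / 2)) := by
  have h2 : Integrable (fun ξ : ℝ => ξ ^ (2 * n) * Real.exp (-(1/2) * ξ ^ 2)) := by
    have h := integrable_rpow_mul_exp_neg_mul_sq (by norm_num : (0:ℝ) < 1/2)
      (s := ((2 * n : ℕ) : ℝ)) (by exact_mod_cast lt_of_lt_of_le neg_one_lt_zero (Nat.cast_nonneg _))
    simp only [Real.rpow_natCast] at h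
    exact h
  have h1 : Integrable (fun ξ : ℝ => Real.exp (-(1/2) * ξ ^ 2)) :=
    integrable_exp_neg_mul_sq (by norm_num)
  refine Integrable.mono' (((h1.add h2).const_mul (2^n))) ?_ ?_
  · exact (Continuous.mul (by continuity) (by continuity)).aestronglyMeasurable
  · filter_upwards with ξ
    have he : Real.exp (-ξ ^ 2 / 2) = Real.exp (-(1/2) * ξ^2) := by ring_nf
    have hb : (1 + ξ ^ 2) ^ n ≤ 2 ^ n * (1 + ξ ^ (2*n)) := by
      have h3 : (1 + ξ ^ 2) ^ n ≤ (2 * max 1 (ξ ^ 2)) ^ n := by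
        apply pow_le_pow_left₀ (by positivity)
        rcases le_total 1 (ξ^2) with h | h
        · rw [max_eq_right h]; linarith
        · rw [max_eq_left h]; linarith
      have h4 : (max 1 (ξ^2)) ^ n ≤ 1 + ξ ^ (2*n) := by
        rcases le_total 1 (ξ^2) with h | h
        · rw [max_eq_right h, pow_mul]; nlinarith [pow_nonneg (by positivity : (0:ℝ) ≤ ξ^2) n]
        · rw [max_eq_left h, one_pow]
          nlinarith [pow_nonneg (sq_nonneg ξ) n, (by rw [pow_mul] : ξ ^ (2*n) = (ξ^2)^n)]
      calc (1 + ξ ^ 2) ^ n ≤ (2 * max 1 (ξ ^ 2)) ^ n := h3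
        _ = 2 ^ n * (max 1 (ξ^2)) ^ n := by rw [mul_pow]
        _ ≤ 2 ^ n * (1 + ξ ^ (2*n)) := by
            exact mul_le_mul_of_nonneg_left h4 (by positivity)
    rw [Real.norm_eq_abs, abs_mul, abs_of_nonneg (by positivity : (0:ℝ) ≤ (1+ξ^2)^n),
      abs_of_nonneg (Real.exp_pos _).le, he]
    calc (1 + ξ ^ 2) ^ n * Real.exp (-(1/2) * ξ^2)
        ≤ 2 ^ n * (1 + ξ ^ (2*n)) * Real.exp (-(1/2) * ξ^2) := by
          exact mul_le_mul_of_nonneg_right hb (Real.exp_pos _).le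
      _ = 2 ^ n * (Real.exp (-(1/2) * ξ^2) + ξ ^ (2*n) * Real.exp (-(1/2) * ξ^2)) := by ring

lemma poly_bound_comp {w : ℝ → ℝ} {Cw : ℝ} {k : ℕ} (hw : ∀ y, |w y| ≤ Cw * (1+y^2)^k)
    {b σ B : ℝ} (hb : b^2 ≤ B) (hσ : σ^2 ≤ 1) (ξ : ℝ) :
    |w (b + σ*ξ)| ≤ Cw * ((4+2*B)*(1+ξ^2))^k := by
  have hCw : 0 ≤ Cw := by have := (abs_nonneg (w 0)).trans (hw 0); simpa using this
  refine (hw _).trans (mul_le_mul_of_nonneg_left (pow_le_pow_left₀ (by positivity) ?_ k) hCw)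
  have h1 : σ^2 * ξ^2 ≤ ξ^2 := by nlinarith [sq_nonneg ξ]
  nlinarith [sq_nonneg (b - σ*ξ), sq_nonneg ξ, sq_nonneg b]

lemma integrable_comp_gauss {w : ℝ → ℝ} (hwc : Continuous w) {Cw : ℝ} {k : ℕ}
    (hw : ∀ y, |w y| ≤ Cw * (1+y^2)^k) (b σ : ℝ) (hσ : σ^2 ≤ 1) (j : ℕ) :
    Integrable (fun ξ : ℝ => w (b + σ*ξ) * ξ^j * Real.exp (-ξ^2/2)) := by
  have hCw : 0 ≤ Cw := by have := (abs_nonneg (w 0)).trans (hw 0); simpa using this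
  refine Integrable.mono' ((gauss_poly_int (k+j)).const_mul (Cw * (4+2*b^2)^k)) ?_ ?_
  · exact (Continuous.mul (Continuous.mul (hwc.comp (by continuity)) (by continuity))
      (by continuity)).aestronglyMeasurable
  · filter_upwards with ξ
    rw [Real.norm_eq_abs, abs_mul, abs_mul, abs_of_nonneg (Real.exp_pos _).le]
    have h1 : |w (b + σ*ξ)| ≤ Cw * ((4+2*b^2)*(1+ξ^2))^k :=
      poly_bound_comp hw le_rfl hσ ξ
    have h2 : |ξ^j| ≤ (1+ξ^2)^j := by
      rw [abs_pow]
      exact pow_le_pow_left₀ (abs_nonneg ξ) (by nlinarith [abs_nonneg ξ, sq_abs ξ]) j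
    calc |w (b + σ*ξ)| * |ξ^j| * Real.exp (-ξ^2/2)
        ≤ (Cw * ((4+2*b^2)*(1+ξ^2))^k) * ((1+ξ^2)^j) * Real.exp (-ξ^2/2) := by
          apply mul_le_mul_of_nonneg_right _ (Real.exp_pos _).le
          exact mul_le_mul h1 h2 (abs_nonneg _) (by positivity)
      _ = Cw * (4+2*b^2)^k * ((1+ξ^2)^(k+j) * Real.exp (-ξ^2/2)) := by
          rw [mul_pow, pow_add]; ring
lemma gauss_poly_tendsto (k : ℕ) {l : Filter ℝ} (hl : Tendsto (fun ξ : ℝ => ξ^2) l atTop) :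
    Tendsto (fun ξ : ℝ => (1 + ξ^2)^k * Real.exp (-ξ^2/2)) l (𝓝 0) := by
  have hF : Tendsto (fun u : ℝ => (1 + 2*u)^k * Real.exp (-u)) atTop (𝓝 0) := by
    have := Polynomial.tendsto_div_exp_atTop ((1 + 2 * Polynomial.X : Polynomial ℝ)^k)
    refine this.congr (fun u => ?_)
    simp [Real.exp_neg, div_eq_mul_inv]
  have hcomp : Tendsto (fun ξ : ℝ => ξ^2/2) l atTop := hl.atTop_div_const two_pos
  have := hF.comp hcomp
  refine this.congr (fun ξ => ?_)
  simp only [Function.comp]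
  ring_nf
lemma gauss_ibp (v : ℝ → ℝ) (hv : ContDiff ℝ 2 v) {C : ℝ} {k : ℕ}
    (h1 : ∀ y, |deriv v y| ≤ C * (1+y^2)^k) (h2 : ∀ y, |deriv (deriv v) y| ≤ C * (1+y^2)^k)
    (b σ : ℝ) (hσ : σ^2 ≤ 1) :
    ∫ ξ : ℝ, ξ * deriv v (b + σ*ξ) * Real.exp (-ξ^2/2)
      = σ * ∫ ξ : ℝ, deriv (deriv v) (b + σ*ξ) * Real.exp (-ξ^2/2) := by
  have hv2 : ContDiff ℝ (1 + 1 : WithTop ℕ∞) v := by exact_mod_cast hv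
  have hv1 : ContDiff ℝ 1 (deriv v) := (contDiff_succ_iff_deriv.mp hv2).2.2
  have hdv1 : Differentiable ℝ (deriv v) := (contDiff_one_iff_deriv.mp hv1).1
  have hcv2 : Continuous (deriv (deriv v)) := (contDiff_one_iff_deriv.mp hv1).2
  have hcv1 : Continuous (deriv v) := hv1.continuous
  set G : ℝ → ℝ := fun ξ => -(deriv v (b + σ*ξ)) * Real.exp (-ξ^2/2) with hGdef
  set g : ℝ → ℝ := fun ξ => ξ * deriv v (b + σ*ξ) * Real.exp (-ξ^2/2)
      - σ * (deriv (deriv v) (b + σ*ξ) * Real.exp (-ξ^2/2)) with hgdef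
  have hG : ∀ ξ : ℝ, HasDerivAt G (g ξ) ξ := by
    intro ξ
    have hinner : HasDerivAt (fun ξ : ℝ => b + σ*ξ) σ ξ := by
      simpa using ((hasDerivAt_id ξ).const_mul σ).const_add b
    have hd1 : HasDerivAt (fun ξ : ℝ => deriv v (b + σ*ξ))
        (deriv (deriv v) (b + σ*ξ) * σ) ξ :=
      by have := ((hdv1 (b + σ*ξ)).hasDerivAt).comp ξ hinner; exact this
    have hexp : HasDerivAt (fun ξ : ℝ => Real.exp (-ξ^2/2))
        (Real.exp (-ξ^2/2) * (-(2 * ξ^1) / 2)) ξ :=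
      (((hasDerivAt_pow 2 ξ).neg).div_const 2).exp
    have := (hd1.neg).mul hexp
    exact this.congr_deriv (by simp only [hgdef, Pi.neg_apply]; ring)
  have hint1 : Integrable (fun ξ : ℝ => ξ * deriv v (b + σ*ξ) * Real.exp (-ξ^2/2)) := by
    have h := integrable_comp_gauss hcv1 h1 b σ hσ 1
    refine h.congr ?_
    filter_upwards with ξ; ring
  have hint2 : Integrable (fun ξ : ℝ => deriv (deriv v) (b + σ*ξ) * Real.exp (-ξ^2/2)) := by
    have h := integrable_comp_gauss hcv2 h2 b σ hσ 0
    refine h.congr ?_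
    filter_upwards with ξ; ring
  have hgint : Integrable g := hint1.sub (hint2.const_mul σ)
  have htend : ∀ {l : Filter ℝ}, Tendsto (fun ξ : ℝ => ξ^2) l atTop → Tendsto G l (𝓝 0) := by
    intro l hl
    apply squeeze_zero_norm
      (a := fun ξ : ℝ => (C * (4+2*b^2)^k) * ((1+ξ^2)^k * Real.exp (-ξ^2/2)))
    · intro ξ
      rw [hGdef]
      simp only [Real.norm_eq_abs, abs_mul, abs_neg, abs_of_nonneg (Real.exp_pos _).le]
      have := poly_bound_comp h1 (le_refl (b^2)) hσ ξ
      calc |deriv v (b + σ*ξ)| * Real.exp (-ξ^2/2)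
          ≤ (C * ((4+2*b^2)*(1+ξ^2))^k) * Real.exp (-ξ^2/2) :=
            mul_le_mul_of_nonneg_right this (Real.exp_pos _).le
        _ = (C * (4+2*b^2)^k) * ((1+ξ^2)^k * Real.exp (-ξ^2/2)) := by rw [mul_pow]; ring
    · simpa using (gauss_poly_tendsto k hl).const_mul (C * (4+2*b^2)^k)
  have htop : Tendsto G atTop (𝓝 0) := htend (by
    simpa using (tendsto_pow_atTop (two_ne_zero)))
  have hbot : Tendsto G atBot (𝓝 0) := by
    refine htend ?_
    have : Tendsto (fun ξ : ℝ => (-ξ)^2) atBot atTop := by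
      refine (tendsto_pow_atTop (two_ne_zero)).comp tendsto_neg_atBot_atTop
    refine this.congr (fun ξ => by ring)
  have hIoi : ∫ ξ in Set.Ioi (0:ℝ), g ξ = 0 - G 0 :=
    integral_Ioi_of_hasDerivAt_of_tendsto (hG 0).continuousAt.continuousWithinAt
      (fun ξ _ => hG ξ) hgint.integrableOn htop
  have hIic : ∫ ξ in Set.Iic (0:ℝ), g ξ = G 0 - 0 :=
    integral_Iic_of_hasDerivAt_of_tendsto (hG 0).continuousAt.continuousWithinAt
      (fun ξ _ => hG ξ) hgint.integrableOn hbot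
  have hzero : ∫ ξ : ℝ, g ξ = 0 := by
    rw [← intervalIntegral.integral_Iic_add_Ioi hgint.integrableOn hgint.integrableOn, hIoi, hIic]
    ring
  have hsplit : ∫ ξ : ℝ, g ξ
      = (∫ ξ : ℝ, ξ * deriv v (b + σ*ξ) * Real.exp (-ξ^2/2))
        - σ * ∫ ξ : ℝ, deriv (deriv v) (b + σ*ξ) * Real.exp (-ξ^2/2) := by
    simp only [hgdef]
    rw [integral_sub hint1 (hint2.const_mul σ), integral_const_mul]
  rw [hzero] at hsplit
  linarith [hsplit]
noncomputable def sig (t : ℝ) : ℝ := Real.sqrt ((1 - Real.exp (-t))/2)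

lemma sig_nonneg (t : ℝ) : 0 ≤ sig t := Real.sqrt_nonneg _

lemma sig_le_one (t : ℝ) : sig t ≤ 1 := by
  have h : sig t ≤ Real.sqrt 1 := Real.sqrt_le_sqrt (by nlinarith [Real.exp_pos (-t)])
  simpa using h

lemma sig_sq_le_one (t : ℝ) : sig t ^ 2 ≤ 1 :=
  pow_le_one₀ (sig_nonneg t) (sig_le_one t)

lemma sig_sq {t : ℝ} (ht : 0 ≤ t) : sig t ^ 2 = (1 - Real.exp (-t))/2 := by
  have he : Real.exp (-t) ≤ 1 := by
    have := Real.exp_le_exp.mpr (neg_nonpos.mpr ht)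
    simpa using this
  rw [sig, Real.sq_sqrt (by linarith)]

lemma sig_pos {t : ℝ} (ht : 0 < t) : 0 < sig t := by
  rw [sig]
  apply Real.sqrt_pos.mpr
  have : Real.exp (-t) < 1 := by
    rw [Real.exp_lt_one_iff]; linarith
  linarith

lemma sig_mono {a t : ℝ} (h : a ≤ t) : sig a ≤ sig t := by
  apply Real.sqrt_le_sqrt
  have := Real.exp_le_exp.mpr (neg_le_neg h)
  linarith
noncomputable def MF (v : ℝ → ℝ) (x t ξ : ℝ) : ℝ :=
  v (Real.exp (-t/2) * x + sig t * ξ) * Real.exp (-ξ^2/2)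

noncomputable def MI (v : ℝ → ℝ) (x t : ℝ) : ℝ := ∫ ξ : ℝ, MF v x t ξ

noncomputable def MF' (v : ℝ → ℝ) (x t ξ : ℝ) : ℝ :=
  deriv v (Real.exp (-t/2) * x + sig t * ξ) *
    (Real.exp (-t/2) * -(1/2) * x + 1/(2 * sig t) * (Real.exp (-t)/2) * ξ) *
    Real.exp (-ξ^2/2)

lemma bf_sq_le {t x : ℝ} (ht : -1 ≤ t) : (Real.exp (-t/2) * x)^2 ≤ Real.exp 1 * x^2 := by
  have h1 : (Real.exp (-t/2))^2 = Real.exp (-t) := by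
    rw [sq, ← Real.exp_add]; congr 1; ring
  have h2 : Real.exp (-t) ≤ Real.exp 1 := Real.exp_le_exp.mpr (by linarith)
  rw [mul_pow, h1]
  exact mul_le_mul_of_nonneg_right h2 (sq_nonneg x)

lemma MF_continuous {v : ℝ → ℝ} (hvc : Continuous v) (x t : ℝ) :
    Continuous (MF v x t) := by
  unfold MF
  exact (hvc.comp (by continuity)).mul (by continuity)

lemma MF_integrable {v : ℝ → ℝ} (hvc : Continuous v) {C : ℝ} {k : ℕ}
    (h0 : ∀ y, |v y| ≤ C * (1+y^2)^k) (x t : ℝ) :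
    Integrable (MF v x t) := by
  have h := integrable_comp_gauss hvc h0 (Real.exp (-t/2) * x) (sig t) (sig_sq_le_one t) 0
  refine h.congr ?_
  filter_upwards with ξ
  simp [MF]

lemma MI_zero {v : ℝ → ℝ} (x : ℝ) : MI v x 0 = v x * Real.sqrt (2*Real.pi) := by
  have hσ : sig 0 = 0 := by simp [sig]
  have h1 : MI v x 0 = ∫ ξ : ℝ, v x * Real.exp (-ξ^2/2) := by
    simp [MI, MF, hσ]
  rw [h1, integral_const_mul]
  congr 1
  have h2 : ∀ ξ : ℝ, Real.exp (-ξ^2/2) = Real.exp (-(1/2) * ξ^2) := fun ξ => by ring_nf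
  simp_rw [h2]
  rw [integral_gaussian]
  congr 1
  ring

lemma MI_continuousAt {v : ℝ → ℝ} (hvc : Continuous v) {C : ℝ} {k : ℕ}
    (h0 : ∀ y, |v y| ≤ C * (1+y^2)^k) (x : ℝ) {t₀ : ℝ} (ht₀ : 0 ≤ t₀) :
    ContinuousAt (MI v x) t₀ := by
  have hrfl : MI v x = fun t => ∫ ξ : ℝ, MF v x t ξ := rfl
  rw [hrfl]
  apply continuousAt_of_dominated (bound := fun ξ : ℝ =>
      C * ((4 + 2*(Real.exp 1 * x^2)) * (1+ξ^2))^k * Real.exp (-ξ^2/2))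
  · exact Filter.Eventually.of_forall fun t => (MF_continuous hvc x t).aestronglyMeasurable
  · filter_upwards [Ioi_mem_nhds (show (-1:ℝ) < t₀ by linarith)] with t ht
    filter_upwards with ξ
    have hd := poly_bound_comp h0 (bf_sq_le (x := x) (le_of_lt ht)) (sig_sq_le_one t) ξ
    have : ‖MF v x t ξ‖ = |v (Real.exp (-t/2) * x + sig t * ξ)| * Real.exp (-ξ^2/2) := by
      rw [MF, Real.norm_eq_abs, abs_mul, abs_of_nonneg (Real.exp_pos _).le]
    rw [this]
    exact mul_le_mul_of_nonneg_right hd (Real.exp_pos _).le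
  · refine ((gauss_poly_int k).const_mul (C * (4 + 2*(Real.exp 1 * x^2))^k)).congr ?_
    filter_upwards with ξ
    rw [mul_pow]; ring
  · filter_upwards with ξ
    have harg : Continuous (fun t : ℝ => Real.exp (-t/2) * x + sig t * ξ) := by
      apply Continuous.add
      · exact (Real.continuous_exp.comp (by continuity)).mul continuous_const
      · exact ((Real.continuous_sqrt.comp (by continuity)).mul continuous_const)
    have : Continuous (fun t => MF v x t ξ) := by
      unfold MF
      exact (hvc.comp harg).mul continuous_const
    exact this.continuousAt
lemma MF_hasDerivAt {v : ℝ → ℝ} (hv : ContDiff ℝ 2 v) (x ξ : ℝ) {t : ℝ} (ht : 0 < t) :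
    HasDerivAt (fun t => MF v x t ξ) (MF' v x t ξ) t := by
  have hdv : Differentiable ℝ v := hv.differentiable (by norm_num)
  have h1 : HasDerivAt (fun t : ℝ => Real.exp (-t)) (Real.exp (-t) * (-1)) t := by
    have := ((hasDerivAt_id t).neg).exp
    simpa using this
  have hu : HasDerivAt (fun t : ℝ => (1 - Real.exp (-t))/2) (Real.exp (-t)/2) t := by
    have := (h1.const_sub 1).div_const 2
    exact this.congr_deriv (by ring)
  have hexplt : Real.exp (-t) < 1 := by
    rw [Real.exp_lt_one_iff]; linarith
  have hune : (1 - Real.exp (-t))/2 ≠ 0 := ne_of_gt (by linarith)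
  have hσ' : HasDerivAt sig (1/(2 * sig t) * (Real.exp (-t)/2)) t := by
    have := (Real.hasDerivAt_sqrt hune).comp t hu
    exact this
  have hb : HasDerivAt (fun t : ℝ => Real.exp (-t/2) * x) (Real.exp (-t/2) * -(1/2) * x) t := by
    have h2 : HasDerivAt (fun t : ℝ => -t/2) ((-1 : ℝ)/2) t := by
      exact (hasDerivAt_id' t).neg.div_const 2
    have := (h2.exp).mul_const x
    exact this.congr_deriv (by ring)
  have hm : HasDerivAt (fun t => Real.exp (-t/2) * x + sig t * ξ)
      (Real.exp (-t/2) * -(1/2) * x + 1/(2 * sig t) * (Real.exp (-t)/2) * ξ) t :=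
    hb.add (hσ'.mul_const ξ)
  have hcomp := ((hdv _).hasDerivAt.comp t hm).mul_const (Real.exp (-ξ^2/2))
  simpa [MF, MF', Function.comp] using hcomp

set_option maxHeartbeats 1000000 in
lemma MI_hasDerivAt {v : ℝ → ℝ} (hv : ContDiff ℝ 2 v) {C : ℝ} {k : ℕ}
    (h0 : ∀ y, |v y| ≤ C * (1+y^2)^k) (h1 : ∀ y, |deriv v y| ≤ C * (1+y^2)^k)
    (x : ℝ) {t₀ : ℝ} (ht₀ : 0 < t₀) :
    HasDerivAt (MI v x) (∫ ξ : ℝ, MF' v x t₀ ξ) t₀ := by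
  have hv2 : ContDiff ℝ (1 + 1 : WithTop ℕ∞) v := by exact_mod_cast hv
  have hv1 : ContDiff ℝ 1 (deriv v) := (contDiff_succ_iff_deriv.mp hv2).2.2
  have hcv1 : Continuous (deriv v) := hv1.continuous
  have hC : 0 ≤ C := by have := (abs_nonneg (v 0)).trans (h0 0); simpa using this
  set M : ℝ := 1/(2 * sig (t₀/2)) * (1/2) with hM
  have hMpos : 0 < M := by
    rw [hM]
    have := sig_pos (show (0:ℝ) < t₀/2 by linarith)
    positivity
  set K : ℝ := C * (4 + 2*(Real.exp 1 * x^2))^k * (|x|/2 + M) with hK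
  have hrfl : MI v x = fun t => ∫ ξ : ℝ, MF v x t ξ := rfl
  rw [hrfl]
  refine (hasDerivAt_integral_of_dominated_loc_of_deriv_le
    (F := fun t ξ => MF v x t ξ) (F' := fun t ξ => MF' v x t ξ)
    (bound := fun ξ : ℝ => K * ((1+ξ^2)^(k+1) * Real.exp (-ξ^2/2)))
    (Metric.ball_mem_nhds t₀ (show (0:ℝ) < t₀/2 by linarith)) ?_ ?_ ?_ ?_ ?_ ?_).2
  · exact Filter.Eventually.of_forall fun t =>
      (MF_continuous hv.continuous x t).aestronglyMeasurable
  · exact MF_integrable hv.continuous h0 x t₀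
  · apply Continuous.aestronglyMeasurable
    unfold MF'
    exact ((hcv1.comp (by continuity)).mul (by continuity)).mul (by continuity)
  · filter_upwards with ξ
    intro t htball
    have htlo : t₀/2 < t := by
      have := abs_lt.mp (mem_ball_iff_norm.mp htball)
      linarith [this.1]
    have htpos : 0 < t := by linarith
    have hd := poly_bound_comp h1 (bf_sq_le (x := x) (by linarith : (-1:ℝ) ≤ t))
      (sig_sq_le_one t) ξ
    have hσt : 0 < sig t := sig_pos htpos
    have hσlow : sig (t₀/2) ≤ sig t := sig_mono (le_of_lt htlo)
    have hσlowpos : 0 < sig (t₀/2) := sig_pos (by linarith)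
    have he1 : Real.exp (-t/2) ≤ 1 := by
      rw [show (1:ℝ) = Real.exp 0 from (Real.exp_zero).symm]
      exact Real.exp_le_exp.mpr (by linarith)
    have he2 : Real.exp (-t) ≤ 1 := by
      rw [show (1:ℝ) = Real.exp 0 from (Real.exp_zero).symm]
      exact Real.exp_le_exp.mpr (by linarith)
    have hs1 : 1/(2 * sig t) ≤ 1/(2 * sig (t₀/2)) := by
      apply one_div_le_one_div_of_le (by linarith) (by linarith)
    have hcoef : |Real.exp (-t/2) * -(1/2) * x + 1/(2 * sig t) * (Real.exp (-t)/2) * ξ|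
        ≤ |x|/2 + M * |ξ| := by
      refine (abs_add_le _ _).trans ?_
      have ha1 : |Real.exp (-t/2) * -(1/2) * x| ≤ |x|/2 := by
        rw [abs_mul, abs_mul, abs_of_nonneg (Real.exp_pos _).le]
        rw [abs_neg, abs_of_nonneg (by norm_num : (0:ℝ) ≤ (1/2:ℝ))]
        nlinarith [abs_nonneg x]
      have ha2 : |1/(2 * sig t) * (Real.exp (-t)/2) * ξ| ≤ M * |ξ| := by
        rw [abs_mul, abs_mul, abs_of_nonneg (by positivity : (0:ℝ) ≤ 1/(2*sig t)),
          abs_of_nonneg (by positivity : (0:ℝ) ≤ Real.exp (-t)/2)]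
        have : 1/(2 * sig t) * (Real.exp (-t)/2) ≤ M := by
          rw [hM]
          apply mul_le_mul hs1 (by linarith) (by positivity) (by positivity)
        exact mul_le_mul_of_nonneg_right this (abs_nonneg ξ)
      linarith
    have hnorm : ‖MF' v x t ξ‖
        = |deriv v (Real.exp (-t/2) * x + sig t * ξ)|
          * |Real.exp (-t/2) * -(1/2) * x + 1/(2 * sig t) * (Real.exp (-t)/2) * ξ|
          * Real.exp (-ξ^2/2) := by
      rw [MF', Real.norm_eq_abs, abs_mul, abs_mul, abs_of_nonneg (Real.exp_pos _).le]
    rw [hnorm]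
    have hb1 : |deriv v (Real.exp (-t/2) * x + sig t * ξ)|
        * |Real.exp (-t/2) * -(1/2) * x + 1/(2 * sig t) * (Real.exp (-t)/2) * ξ|
        ≤ (C * ((4 + 2*(Real.exp 1 * x^2)) * (1+ξ^2))^k) * ((|x|/2 + M) * (1+ξ^2)) := by
      apply mul_le_mul hd _ (abs_nonneg _) (by positivity)
      refine hcoef.trans ?_
      have hξ : |ξ| ≤ 1 + ξ^2 := by nlinarith [abs_nonneg ξ, sq_abs ξ]
      nlinarith [abs_nonneg x, hMpos.le, sq_nonneg ξ]
    calc |deriv v (Real.exp (-t/2) * x + sig t * ξ)|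
          * |Real.exp (-t/2) * -(1/2) * x + 1/(2 * sig t) * (Real.exp (-t)/2) * ξ|
          * Real.exp (-ξ^2/2)
        ≤ (C * ((4 + 2*(Real.exp 1 * x^2)) * (1+ξ^2))^k) * ((|x|/2 + M) * (1+ξ^2))
          * Real.exp (-ξ^2/2) := mul_le_mul_of_nonneg_right hb1 (Real.exp_pos _).le
      _ = K * ((1+ξ^2)^(k+1) * Real.exp (-ξ^2/2)) := by
          rw [hK, mul_pow, pow_succ]; ring
  · exact (gauss_poly_int (k+1)).const_mul K
  · filter_upwards with ξ
    intro t htball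
    have htlo : t₀/2 < t := by
      have := abs_lt.mp (mem_ball_iff_norm.mp htball)
      linarith [this.1]
    exact MF_hasDerivAt hv x ξ (by linarith)
set_option maxHeartbeats 1000000 in
lemma MI_deriv_le {v : ℝ → ℝ} (hv : ContDiff ℝ 2 v) {C : ℝ} {k : ℕ}
    (h0 : ∀ y, |v y| ≤ C * (1+y^2)^k) (h1 : ∀ y, |deriv v y| ≤ C * (1+y^2)^k)
    (h2 : ∀ y, |deriv (deriv v) y| ≤ C * (1+y^2)^k)
    {A₁ : ℝ} (hL : ∀ y, OUgen v y ≤ A₁ * v y)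
    (x : ℝ) {t : ℝ} (ht : 0 < t) :
    (∫ ξ : ℝ, MF' v x t ξ) ≤ A₁ * MI v x t := by
  have hv2 : ContDiff ℝ (1 + 1 : WithTop ℕ∞) v := by exact_mod_cast hv
  have hv1 : ContDiff ℝ 1 (deriv v) := (contDiff_succ_iff_deriv.mp hv2).2.2
  have hcv1 : Continuous (deriv v) := hv1.continuous
  have hcv2 : Continuous (deriv (deriv v)) := (contDiff_one_iff_deriv.mp hv1).2
  set b₀ : ℝ := Real.exp (-t/2) * x with hb₀
  set σ₀ : ℝ := sig t with hσ₀
  have hσpos : 0 < σ₀ := sig_pos ht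
  have hσsq : σ₀^2 = (1 - Real.exp (-t))/2 := sig_sq ht.le
  have hσle : σ₀^2 ≤ 1 := sig_sq_le_one t
  -- integrability facts
  have J0 : Integrable (fun ξ : ℝ => v (b₀ + σ₀ * ξ) * Real.exp (-ξ^2/2)) :=
    MF_integrable hv.continuous h0 x t
  have J1 : Integrable (fun ξ : ℝ => deriv v (b₀ + σ₀ * ξ) * Real.exp (-ξ^2/2)) := by
    refine (integrable_comp_gauss hcv1 h1 b₀ σ₀ hσle 0).congr ?_
    filter_upwards with ξ; simp
  have J1ξ : Integrable (fun ξ : ℝ => ξ * deriv v (b₀ + σ₀ * ξ) * Real.exp (-ξ^2/2)) := by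
    refine (integrable_comp_gauss hcv1 h1 b₀ σ₀ hσle 1).congr ?_
    filter_upwards with ξ; ring
  have J2 : Integrable (fun ξ : ℝ => deriv (deriv v) (b₀ + σ₀ * ξ) * Real.exp (-ξ^2/2)) := by
    refine (integrable_comp_gauss hcv2 h2 b₀ σ₀ hσle 0).congr ?_
    filter_upwards with ξ; simp
  set P : ℝ := ∫ ξ : ℝ, deriv v (b₀ + σ₀ * ξ) * Real.exp (-ξ^2/2) with hP
  set Q : ℝ := ∫ ξ : ℝ, deriv (deriv v) (b₀ + σ₀ * ξ) * Real.exp (-ξ^2/2) with hQ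
  set R : ℝ := ∫ ξ : ℝ, ξ * deriv v (b₀ + σ₀ * ξ) * Real.exp (-ξ^2/2) with hR
  have hibp : R = σ₀ * Q := gauss_ibp v hv h1 h2 b₀ σ₀ hσle
  -- value of ∫ MF'
  have hsplit : (∫ ξ : ℝ, MF' v x t ξ)
      = (Real.exp (-t/2) * -(1/2) * x) * P + (1/(2*σ₀) * (Real.exp (-t)/2)) * R := by
    have e1 : (fun ξ : ℝ => MF' v x t ξ)
        = fun ξ : ℝ => (Real.exp (-t/2) * -(1/2) * x) * (deriv v (b₀ + σ₀ * ξ) * Real.exp (-ξ^2/2))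
          + (1/(2*σ₀) * (Real.exp (-t)/2)) * (ξ * deriv v (b₀ + σ₀ * ξ) * Real.exp (-ξ^2/2)) := by
      funext ξ
      simp only [MF', ← hσ₀, ← hb₀]
      ring
    rw [e1, integral_add (J1.const_mul _) (J1ξ.const_mul _), integral_const_mul,
      integral_const_mul, ← hP, ← hR]
  -- the OU-generator integrand
  have Ja : Integrable (fun ξ : ℝ =>
      (1/4 : ℝ) * (deriv (deriv v) (b₀ + σ₀ * ξ) * Real.exp (-ξ^2/2))) := J2.const_mul _
  have Jb : Integrable (fun ξ : ℝ =>
      (b₀/2) * (deriv v (b₀ + σ₀ * ξ) * Real.exp (-ξ^2/2))) := J1.const_mul _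
  have Jc : Integrable (fun ξ : ℝ =>
      (σ₀/2) * (ξ * deriv v (b₀ + σ₀ * ξ) * Real.exp (-ξ^2/2))) := J1ξ.const_mul _
  have Jbc : Integrable (fun ξ : ℝ =>
      (b₀/2) * (deriv v (b₀ + σ₀ * ξ) * Real.exp (-ξ^2/2))
        + (σ₀/2) * (ξ * deriv v (b₀ + σ₀ * ξ) * Real.exp (-ξ^2/2))) := Jb.add Jc
  have hW : Integrable (fun ξ : ℝ => OUgen v (b₀ + σ₀ * ξ) * Real.exp (-ξ^2/2)) := by
    refine (Ja.sub Jbc).congr ?_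
    filter_upwards with ξ
    simp only [Pi.sub_apply, Pi.add_apply, OUgen]
    ring
  have hval : (∫ ξ : ℝ, OUgen v (b₀ + σ₀ * ξ) * Real.exp (-ξ^2/2))
      = (1/4) * Q - ((b₀/2) * P + (σ₀/2) * R) := by
    have e2 : (fun ξ : ℝ => OUgen v (b₀ + σ₀ * ξ) * Real.exp (-ξ^2/2))
        = fun ξ : ℝ => (1/4) * (deriv (deriv v) (b₀ + σ₀ * ξ) * Real.exp (-ξ^2/2))
          - ((b₀/2) * (deriv v (b₀ + σ₀ * ξ) * Real.exp (-ξ^2/2))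
            + (σ₀/2) * (ξ * deriv v (b₀ + σ₀ * ξ) * Real.exp (-ξ^2/2))) := by
      funext ξ
      simp only [OUgen]
      ring
    rw [e2, integral_sub Ja Jbc, integral_add Jb Jc, integral_const_mul, integral_const_mul,
      integral_const_mul, ← hP, ← hQ, ← hR]
  -- pointwise comparison and integration
  have hcomp : (∫ ξ : ℝ, OUgen v (b₀ + σ₀ * ξ) * Real.exp (-ξ^2/2))
      ≤ ∫ ξ : ℝ, A₁ * (v (b₀ + σ₀ * ξ) * Real.exp (-ξ^2/2)) := by
    refine integral_mono hW (J0.const_mul A₁) ?_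
    intro ξ
    have := mul_le_mul_of_nonneg_right (hL (b₀ + σ₀ * ξ)) (Real.exp_pos (-ξ^2/2)).le
    calc OUgen v (b₀ + σ₀ * ξ) * Real.exp (-ξ^2/2)
        ≤ A₁ * v (b₀ + σ₀ * ξ) * Real.exp (-ξ^2/2) := this
      _ = A₁ * (v (b₀ + σ₀ * ξ) * Real.exp (-ξ^2/2)) := by ring
  have hMIrfl : MI v x t = ∫ ξ : ℝ, v (b₀ + σ₀ * ξ) * Real.exp (-ξ^2/2) := rfl
  have hRHS : (∫ ξ : ℝ, A₁ * (v (b₀ + σ₀ * ξ) * Real.exp (-ξ^2/2))) = A₁ * MI v x t := by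
    rw [integral_const_mul, hMIrfl]
  -- algebra
  have hc2 : (1/(2*σ₀) * (Real.exp (-t)/2)) * σ₀ = Real.exp (-t)/4 := by
    field_simp
    ring
  have hquarter : (1:ℝ)/4 - σ₀^2/2 = Real.exp (-t)/4 := by rw [hσsq]; ring
  have hbeq : Real.exp (-t/2) * -(1/2) * x = -(b₀/2) := by rw [hb₀]; ring
  rw [hval, hRHS] at hcomp
  rw [hibp] at hcomp
  rw [hsplit, hibp, hbeq]
  have key : 1 / (2 * σ₀) * (Real.exp (-t) / 2) * (σ₀ * Q)
      = (1/4) * Q - σ₀/2 * (σ₀ * Q) := by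
    have e3 : 1 / (2*σ₀) * (Real.exp (-t)/2) * (σ₀ * Q) = (Real.exp (-t)/4) * Q := by
      field_simp
      ring
    rw [e3, ← hquarter]
    ring
  linarith [hcomp, key]
set_option maxHeartbeats 1000000 in
/-- Semigroup Grönwall comparison: if `v ∈ C²` is positive with `v, v′, v″` of at most
polynomial growth and `Lv ≤ A₁v` pointwise with `A₁ ≥ 0`, then `e^{sL}v ≤ e^{sA₁}v`
pointwise for every `s ≥ 0`. -/
theorem mehler_gronwall (v : ℝ → ℝ) (hv : ContDiff ℝ 2 v) (hpos : ∀ x, 0 < v x)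
    (hgrowth : ∃ (C : ℝ) (k : ℕ), ∀ x : ℝ,
      |v x| + |deriv v x| + |deriv (deriv v) x| ≤ C * (1 + x ^ 2) ^ k)
    (A₁ : ℝ) (hA₁ : 0 ≤ A₁) (hL : ∀ x, OUgen v x ≤ A₁ * v x)
    (s : ℝ) (hs : 0 ≤ s) (x : ℝ) :
    mehler s v x ≤ Real.exp (s * A₁) * v x := by
  obtain ⟨C, k, hCk⟩ := hgrowth
  have h0 : ∀ y, |v y| ≤ C * (1+y^2)^k := fun y => by
    have := hCk y
    have a := abs_nonneg (deriv v y); have b := abs_nonneg (deriv (deriv v) y)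
    linarith
  have h1 : ∀ y, |deriv v y| ≤ C * (1+y^2)^k := fun y => by
    have := hCk y
    have a := abs_nonneg (v y); have b := abs_nonneg (deriv (deriv v) y)
    linarith
  have h2 : ∀ y, |deriv (deriv v) y| ≤ C * (1+y^2)^k := fun y => by
    have := hCk y
    have a := abs_nonneg (v y); have b := abs_nonneg (deriv v y)
    linarith
  set c : ℝ := (2*Real.pi) ^ (-(1:ℝ)/2) with hc
  have hmeq : ∀ t, mehler t v x = c * MI v x t := fun t => rfl
  have hcpos : 0 < c := Real.rpow_pos_of_pos (by positivity) _
  set h : ℝ → ℝ := fun t => Real.exp (-A₁ * t) * (c * MI v x t) with hh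
  have hMIcont : ContinuousOn (MI v x) (Set.Icc 0 s) := fun t ht =>
    (MI_continuousAt hv.continuous h0 x ht.1).continuousWithinAt
  have hconth : ContinuousOn h (Set.Icc 0 s) := by
    rw [hh]
    exact ((Real.continuous_exp.comp (continuous_const.mul continuous_id)).continuousOn).mul
      (continuousOn_const.mul hMIcont)
  have hasDerivAt_h : ∀ t ∈ Set.Ioo 0 s, HasDerivAt h
      (Real.exp (-A₁*t) * (-A₁) * (c * MI v x t)
        + Real.exp (-A₁*t) * (c * ∫ ξ : ℝ, MF' v x t ξ)) t := by
    intro t ht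
    have hlin : HasDerivAt (fun t : ℝ => -A₁ * t) (-A₁) t := by
      simpa using (hasDerivAt_id t).const_mul (-A₁)
    have hMI : HasDerivAt (fun t => c * MI v x t) (c * ∫ ξ : ℝ, MF' v x t ξ) t :=
      (MI_hasDerivAt hv h0 h1 x ht.1).const_mul c
    exact (hlin.exp).mul hMI
  have hanti : AntitoneOn h (Set.Icc 0 s) := by
    apply antitoneOn_of_deriv_nonpos (convex_Icc 0 s) hconth
    · intro t htint
      rw [interior_Icc] at htint
      exact (hasDerivAt_h t htint).differentiableAt.differentiableWithinAt
    · intro t htint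
      rw [interior_Icc] at htint
      rw [(hasDerivAt_h t htint).deriv]
      have hD := MI_deriv_le hv h0 h1 h2 hL x htint.1
      have hE := Real.exp_pos (-A₁*t)
      nlinarith [mul_le_mul_of_nonneg_left hD (mul_pos hE hcpos).le]
  have hcval : c * Real.sqrt (2*Real.pi) = 1 := by
    rw [hc, Real.sqrt_eq_rpow, show (-(1:ℝ)/2) = -(1/2 : ℝ) by norm_num,
      Real.rpow_neg (by positivity)]
    exact inv_mul_cancel₀ (ne_of_gt (Real.rpow_pos_of_pos (by positivity) _))
  have hh0 : h 0 = v x := by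
    rw [hh]
    simp only [mul_zero, Real.exp_zero, one_mul, MI_zero]
    rw [show c * (v x * Real.sqrt (2*Real.pi)) = v x * (c * Real.sqrt (2*Real.pi)) by ring,
      hcval, mul_one]
  have hle : Real.exp (-A₁*s) * (c * MI v x s) ≤ v x := by
    have := hanti ⟨le_rfl, hs⟩ ⟨hs, le_rfl⟩ hs
    rw [hh0] at this
    exact this
  have hexp1 : Real.exp (s*A₁) * Real.exp (-A₁*s) = 1 := by
    rw [← Real.exp_add, show s*A₁ + -A₁*s = 0 by ring, Real.exp_zero]
  calc mehler s v x = c * MI v x s := hmeq s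
    _ = Real.exp (s*A₁) * (Real.exp (-A₁*s) * (c * MI v x s)) := by
        rw [← mul_assoc, hexp1, one_mul]
    _ ≤ Real.exp (s*A₁) * v x := mul_le_mul_of_nonneg_left hle (Real.exp_pos _).le
end

section
/- Approximate time reversal, lower bound: Let v ∈ C⁶(ℝ) be positive with v and its first six derivatives of at most polynomial growth, ∫ v dμ = 1, and suppose Lv ≤ A₁v, L²v ≥ −A₂v, |L³v| ≤ A₃v pointwise with constants A₁, A₂, A₃ ≥ 0. Let t > 0 satisfy tA₁ + (t²/2)A₂ ≤ 1 and t³A₃ ≤ 1. Then g_t := (1 − tL + (1/2)t²L²)v is nonnegative with ∫ g_t dμ = 1 (i.e. g_t is a probability density with respect to μ), and the function v_t := e^{tL}g_t satisfies pointwise v_t ≥ (1 − (1/6)t³A₃ e^{tA₁}) v ≥ (1/2) v. -/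
open MeasureTheory
open scoped BigOperators

/-- The reversible measure `μ(dx) = e^{−x²} dx` of the OU process. -/
noncomputable def gaussMeasure : Measure ℝ :=
  volume.withDensity fun x => ENNReal.ofReal (Real.exp (-x ^ 2))

open MeasureTheory Real Set Filter Topology


lemma abs_le_one_add_sq (x : ℝ) : |x| ≤ 1 + x ^ 2 := by
  rcases abs_cases x with ⟨h, _⟩ | ⟨h, _⟩ <;> nlinarith [sq_nonneg (x - 1), sq_nonneg (x + 1)]

lemma one_add_sq_pow_mono {k k' : ℕ} (h : k ≤ k') (x : ℝ) :
    (1 + x ^ 2) ^ k ≤ (1 + x ^ 2) ^ k' :=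
  pow_le_pow_right₀ (by nlinarith [sq_nonneg x]) h

lemma one_add_sq_pow_key (k : ℕ) (x : ℝ) :
    (1 + x ^ 2) ^ k ≤ 2 ^ k + 2 ^ k * x ^ (2 * k) := by
  have h1 : (1 + x ^ 2) ^ k ≤ (2 * max 1 (x ^ 2)) ^ k := by
    apply pow_le_pow_left₀ (by positivity)
    rcases le_total (x ^ 2) 1 with h | h
    · rw [max_eq_left h]; linarith
    · rw [max_eq_right h]; linarith
  refine h1.trans ?_
  rw [mul_pow]
  rcases le_total (x ^ 2) 1 with h | h
  · rw [max_eq_left h, one_pow, mul_one]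
    nlinarith [pow_nonneg (sq_nonneg x) k, pow_pos (by norm_num : (0:ℝ) < 2) k,
      pow_le_one₀ (n := k) (sq_nonneg x) h, pow_nonneg (sq_nonneg x) k,
      pow_mul x 2 k, pow_nonneg (pow_nonneg (sq_nonneg x) k) 1]
  · rw [max_eq_right h, ← pow_mul]
    have h2 : (0:ℝ) < 2 ^ k := by positivity
    have h3 : (0:ℝ) ≤ x ^ (2 * k) := by rw [pow_mul]; positivity
    nlinarith

lemma integrable_pow_gauss (n : ℕ) {b : ℝ} (hb : 0 < b) :
    Integrable (fun x : ℝ => x ^ n * Real.exp (-b * x ^ 2)) := by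
  have h := integrable_rpow_mul_exp_neg_mul_sq hb (s := n)
    (lt_of_lt_of_le neg_one_lt_zero (Nat.cast_nonneg n))
  have he : (fun x : ℝ => x ^ (n:ℝ) * Real.exp (-b * x ^ 2))
      = fun x : ℝ => x ^ n * Real.exp (-b * x ^ 2) := by
    funext x; rw [Real.rpow_natCast]
  rw [he] at h
  exact h

lemma integrable_one_add_sq_pow_gauss (k : ℕ) {b : ℝ} (hb : 0 < b) :
    Integrable (fun x : ℝ => (1 + x ^ 2) ^ k * Real.exp (-b * x ^ 2)) := by
  have hint : Integrable (fun x : ℝ => 2 ^ k * Real.exp (-b * x ^ 2)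
      + 2 ^ k * (x ^ (2 * k) * Real.exp (-b * x ^ 2))) :=
    ((integrable_exp_neg_mul_sq hb).const_mul _).add
      ((integrable_pow_gauss (2 * k) hb).const_mul _)
  apply hint.mono' ((((continuous_const.add (continuous_pow 2)).pow k).mul (by fun_prop)).aestronglyMeasurable)
  filter_upwards with x
  change ‖(1 + x ^ 2) ^ k * Real.exp (-b * x ^ 2)‖ ≤ _
  rw [Real.norm_eq_abs, abs_of_nonneg (by positivity)]
  have h2 : (0:ℝ) < Real.exp (-b * x ^ 2) := Real.exp_pos _
  nlinarith [one_add_sq_pow_key k x, h2]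

lemma integrable_poly_gauss {f : ℝ → ℝ} (hf : Continuous f) {C : ℝ} {k : ℕ}
    (hb : ∀ x, |f x| ≤ C * (1 + x ^ 2) ^ k) {b : ℝ} (hbpos : 0 < b) :
    Integrable (fun x => f x * Real.exp (-b * x ^ 2)) := by
  apply ((integrable_one_add_sq_pow_gauss k hbpos).const_mul C).mono'
    ((hf.mul (by fun_prop)).aestronglyMeasurable)
  filter_upwards with x
  change ‖f x * Real.exp (-b * x ^ 2)‖ ≤ _
  rw [Real.norm_eq_abs, abs_mul, Real.abs_exp]
  have h2 : (0:ℝ) < Real.exp (-b * x ^ 2) := Real.exp_pos _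
  calc |f x| * Real.exp (-b * x ^ 2) ≤ (C * (1 + x ^ 2) ^ k) * Real.exp (-b * x ^ 2) := by
        gcongr; exact hb x
    _ = C * ((1 + x ^ 2) ^ k * Real.exp (-b * x ^ 2)) := by ring

lemma sq_poly_bound (A : ℝ) (k : ℕ) {a σ : ℝ} (ha : |a| ≤ A) (hσ : |σ| ≤ 1) (ξ : ℝ) :
    (1 + (a + σ * ξ) ^ 2) ^ k ≤ 2 ^ k * (1 + A ^ 2) ^ k * (1 + ξ ^ 2) ^ k := by
  have ha2 : a ^ 2 ≤ A ^ 2 := by nlinarith [abs_nonneg a, sq_abs a, ha]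
  have hσ2 : σ ^ 2 ≤ 1 := by nlinarith [sq_abs σ, abs_nonneg σ]
  have h1 : 1 + (a + σ * ξ) ^ 2 ≤ 2 * (1 + A ^ 2) * (1 + ξ ^ 2) := by
    nlinarith [sq_nonneg (a - σ * ξ), sq_nonneg ξ, sq_nonneg a,
      mul_le_of_le_one_left (sq_nonneg ξ) hσ2, sq_nonneg (σ * ξ), mul_pow σ ξ 2]
  calc (1 + (a + σ * ξ) ^ 2) ^ k ≤ (2 * (1 + A ^ 2) * (1 + ξ ^ 2)) ^ k :=
        pow_le_pow_left₀ (by positivity) h1 k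
    _ = 2 ^ k * (1 + A ^ 2) ^ k * (1 + ξ ^ 2) ^ k := by rw [mul_pow, mul_pow]

lemma tendsto_poly_gauss_cocompact (C : ℝ) (k : ℕ) {b : ℝ} (hb : 0 < b) :
    Tendsto (fun x : ℝ => C * (1 + x ^ 2) ^ k * Real.exp (-b * x ^ 2)) (cocompact ℝ) (𝓝 0) := by
  have h0 : Tendsto (fun x : ℝ => |x| ^ ((0:ℕ):ℝ) * Real.exp (-b * x ^ 2)) (cocompact ℝ) (𝓝 0) :=
    tendsto_rpow_abs_mul_exp_neg_mul_sq_cocompact hb _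
  have h2k : Tendsto (fun x : ℝ => |x| ^ ((2*k : ℕ):ℝ) * Real.exp (-b * x ^ 2)) (cocompact ℝ) (𝓝 0) :=
    tendsto_rpow_abs_mul_exp_neg_mul_sq_cocompact hb _
  have hsum : Tendsto (fun x : ℝ => |C| * (2 ^ k * (|x| ^ ((0:ℕ):ℝ) * Real.exp (-b * x ^ 2))
      + 2 ^ k * (|x| ^ ((2*k : ℕ):ℝ) * Real.exp (-b * x ^ 2)))) (cocompact ℝ) (𝓝 0) := by
    have := ((h0.const_mul (2 ^ k : ℝ)).add (h2k.const_mul (2 ^ k : ℝ))).const_mul |C|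
    simpa using this
  apply squeeze_zero_norm _ hsum
  intro x
  rw [Real.norm_eq_abs, abs_mul, abs_mul, Real.abs_exp,
    abs_of_nonneg (by positivity : (0:ℝ) ≤ (1 + x ^ 2) ^ k)]
  have hx0 : |x| ^ ((0:ℕ):ℝ) = 1 := by norm_num
  have hx2k : |x| ^ ((2*k : ℕ):ℝ) = x ^ (2*k) := by
    rw [Real.rpow_natCast, ← abs_pow, abs_of_nonneg (by rw [pow_mul]; positivity)]
  rw [hx0, hx2k]
  have h2 : (0:ℝ) < Real.exp (-b * x ^ 2) := Real.exp_pos _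
  have hkey := one_add_sq_pow_key k x
  nlinarith [abs_nonneg C, h2, mul_le_mul_of_nonneg_left
    (mul_le_mul_of_nonneg_right hkey h2.le) (abs_nonneg C)]

lemma abs_sub' (a b : ℝ) : |a - b| ≤ |a| + |b| := abs_sub a b

lemma bound_nonneg {f : ℝ → ℝ} {C : ℝ} {k : ℕ}
    (hb : ∀ y, |f y| ≤ C * (1 + y ^ 2) ^ k) : 0 ≤ C :=
  (abs_nonneg (f 0)).trans (by simpa using hb 0)

lemma integrable_poly_gauss_half {f : ℝ → ℝ} (hf : Continuous f) {C : ℝ} {k : ℕ}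
    (hb : ∀ x, |f x| ≤ C * (1 + x ^ 2) ^ k) :
    Integrable (fun x => f x * Real.exp (-x ^ 2 / 2)) := by
  have h := integrable_poly_gauss hf hb (b := (1/2:ℝ)) (by norm_num)
  simpa only [show ∀ x : ℝ, -(1/2 : ℝ) * x ^ 2 = -x ^ 2 / 2 from fun x => by ring] using h

lemma integrable_poly_gauss_one {f : ℝ → ℝ} (hf : Continuous f) {C : ℝ} {k : ℕ}
    (hb : ∀ x, |f x| ≤ C * (1 + x ^ 2) ^ k) :
    Integrable (fun x => f x * Real.exp (-x ^ 2)) := by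
  have h := integrable_poly_gauss hf hb (b := (1:ℝ)) (by norm_num)
  simpa only [show ∀ x : ℝ, -(1 : ℝ) * x ^ 2 = -x ^ 2 from fun x => by ring] using h

lemma sigma_nonneg (s : ℝ) : 0 ≤ Real.sqrt ((1 - Real.exp (-s)) / 2) := Real.sqrt_nonneg _

lemma sigma_le_one (s : ℝ) : Real.sqrt ((1 - Real.exp (-s)) / 2) ≤ 1 := by
  calc Real.sqrt ((1 - Real.exp (-s)) / 2) ≤ Real.sqrt 1 := by
        apply Real.sqrt_le_sqrt
        have := Real.exp_pos (-s)
        linarith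
    _ = 1 := Real.sqrt_one

lemma mehler_c_pos : 0 < (2 * Real.pi) ^ (-(1 : ℝ) / 2) :=
  Real.rpow_pos_of_pos (by positivity) _

lemma mehler_comp_integrable {f : ℝ → ℝ} (hf : Continuous f) {C : ℝ} {k : ℕ}
    (hb : ∀ y, |f y| ≤ C * (1 + y ^ 2) ^ k) (s x : ℝ) :
    Integrable (fun ξ : ℝ => f (Real.exp (-s / 2) * x + Real.sqrt ((1 - Real.exp (-s)) / 2) * ξ)
      * Real.exp (-ξ ^ 2 / 2)) := by
  have hC : 0 ≤ C := bound_nonneg hb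
  apply integrable_poly_gauss_half
    (C := C * (2 ^ k * (1 + (Real.exp (-s / 2) * x) ^ 2) ^ k)) (k := k)
    (by fun_prop)
  intro ξ
  calc |f (Real.exp (-s / 2) * x + Real.sqrt ((1 - Real.exp (-s)) / 2) * ξ)|
      ≤ C * (1 + (Real.exp (-s / 2) * x + Real.sqrt ((1 - Real.exp (-s)) / 2) * ξ) ^ 2) ^ k := hb _
    _ ≤ C * (2 ^ k * (1 + |Real.exp (-s / 2) * x| ^ 2) ^ k * (1 + ξ ^ 2) ^ k) := by
        apply mul_le_mul_of_nonneg_left _ hC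
        exact sq_poly_bound _ k le_rfl (by rw [abs_of_nonneg (sigma_nonneg s)]; exact sigma_le_one s) ξ
    _ = C * (2 ^ k * (1 + (Real.exp (-s / 2) * x) ^ 2) ^ k) * (1 + ξ ^ 2) ^ k := by
        rw [sq_abs]; ring

lemma gauss_half_integral : ∫ ξ : ℝ, Real.exp (-ξ ^ 2 / 2) = Real.sqrt (2 * Real.pi) := by
  have h := integral_gaussian (1/2)
  rw [show Real.pi / (1/2) = 2 * Real.pi from by ring] at h
  simpa only [show ∀ x : ℝ, -(1/2 : ℝ) * x ^ 2 = -x ^ 2 / 2 from fun x => by ring] using h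

lemma mehler_zero_eq (f : ℝ → ℝ) (x : ℝ) : mehler 0 f x = f x := by
  unfold mehler
  simp only [neg_zero, zero_div, Real.exp_zero, one_mul, sub_self, zero_div, Real.sqrt_zero,
    zero_mul, add_zero]
  rw [MeasureTheory.integral_const_mul, gauss_half_integral, Real.sqrt_eq_rpow,
    mul_comm (f x) ((2 * Real.pi) ^ (1/(2:ℝ))), ← mul_assoc,
    ← Real.rpow_add (by positivity : (0:ℝ) < 2 * Real.pi)]
  norm_num [Real.rpow_zero]

lemma mehler_mono {f g : ℝ → ℝ} (s x : ℝ)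
    (hfi : Integrable (fun ξ : ℝ => f (Real.exp (-s / 2) * x
      + Real.sqrt ((1 - Real.exp (-s)) / 2) * ξ) * Real.exp (-ξ ^ 2 / 2)))
    (hgi : Integrable (fun ξ : ℝ => g (Real.exp (-s / 2) * x
      + Real.sqrt ((1 - Real.exp (-s)) / 2) * ξ) * Real.exp (-ξ ^ 2 / 2)))
    (h : ∀ y, f y ≤ g y) : mehler s f x ≤ mehler s g x := by
  unfold mehler
  apply mul_le_mul_of_nonneg_left _ mehler_c_pos.le
  apply MeasureTheory.integral_mono hfi hgi
  intro ξ
  exact mul_le_mul_of_nonneg_right (h _) (Real.exp_nonneg _)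

lemma mehler_const_mul {f : ℝ → ℝ} (a s x : ℝ) :
    mehler s (fun z => a * f z) x = a * mehler s f x := by
  unfold mehler
  rw [show (fun ξ : ℝ => (fun z => a * f z) (Real.exp (-s / 2) * x
      + Real.sqrt ((1 - Real.exp (-s)) / 2) * ξ) * Real.exp (-ξ ^ 2 / 2))
    = (fun ξ : ℝ => a * (f (Real.exp (-s / 2) * x
      + Real.sqrt ((1 - Real.exp (-s)) / 2) * ξ) * Real.exp (-ξ ^ 2 / 2))) from
      funext fun ξ => by ring]
  rw [MeasureTheory.integral_const_mul]; ring

lemma mehler_comb3 {f g h : ℝ → ℝ} (a b s x : ℝ)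
    (hfi : Integrable (fun ξ : ℝ => f (Real.exp (-s / 2) * x
      + Real.sqrt ((1 - Real.exp (-s)) / 2) * ξ) * Real.exp (-ξ ^ 2 / 2)))
    (hgi : Integrable (fun ξ : ℝ => g (Real.exp (-s / 2) * x
      + Real.sqrt ((1 - Real.exp (-s)) / 2) * ξ) * Real.exp (-ξ ^ 2 / 2)))
    (hhi : Integrable (fun ξ : ℝ => h (Real.exp (-s / 2) * x
      + Real.sqrt ((1 - Real.exp (-s)) / 2) * ξ) * Real.exp (-ξ ^ 2 / 2))) :
    mehler s (fun z => f z - a * g z + b * h z) x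
      = mehler s f x - a * mehler s g x + b * mehler s h x := by
  unfold mehler
  rw [show (fun ξ : ℝ => (fun z => f z - a * g z + b * h z) (Real.exp (-s / 2) * x
      + Real.sqrt ((1 - Real.exp (-s)) / 2) * ξ) * Real.exp (-ξ ^ 2 / 2))
    = (fun ξ : ℝ => (f (Real.exp (-s / 2) * x + Real.sqrt ((1 - Real.exp (-s)) / 2) * ξ)
        * Real.exp (-ξ ^ 2 / 2)
      - a * (g (Real.exp (-s / 2) * x + Real.sqrt ((1 - Real.exp (-s)) / 2) * ξ)
        * Real.exp (-ξ ^ 2 / 2)))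
      + b * (h (Real.exp (-s / 2) * x + Real.sqrt ((1 - Real.exp (-s)) / 2) * ξ)
        * Real.exp (-ξ ^ 2 / 2))) from funext fun ξ => by ring]
  have h1 : Integrable (fun ξ : ℝ => f (Real.exp (-s / 2) * x
      + Real.sqrt ((1 - Real.exp (-s)) / 2) * ξ) * Real.exp (-ξ ^ 2 / 2)
      - a * (g (Real.exp (-s / 2) * x + Real.sqrt ((1 - Real.exp (-s)) / 2) * ξ)
        * Real.exp (-ξ ^ 2 / 2))) := hfi.sub (hgi.const_mul a)
  rw [MeasureTheory.integral_add h1 (hhi.const_mul b),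
    MeasureTheory.integral_sub hfi (hgi.const_mul a),
    MeasureTheory.integral_const_mul, MeasureTheory.integral_const_mul]
  ring

lemma integral_eq_zero_of_hasDerivAt {u w : ℝ → ℝ} (h : ∀ y, HasDerivAt u (w y) y)
    (hw : Integrable w) (htop : Filter.Tendsto u Filter.atTop (nhds 0))
    (hbot : Filter.Tendsto u Filter.atBot (nhds 0)) :
    ∫ y, w y = 0 := by
  have h1 : ∫ y in Set.Iic 0, w y = u 0 - 0 :=
    MeasureTheory.integral_Iic_of_hasDerivAt_of_tendsto' (fun y _ => h y) hw.integrableOn hbot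
  have h2 : ∫ y in Set.Ioi 0, w y = 0 - u 0 :=
    MeasureTheory.integral_Ioi_of_hasDerivAt_of_tendsto' (fun y _ => h y) hw.integrableOn htop
  rw [← intervalIntegral.integral_Iic_add_Ioi hw.integrableOn hw.integrableOn, h1, h2]; ring

lemma tendsto_gauss_poly_zero {u : ℝ → ℝ} {C : ℝ} {k : ℕ} {b : ℝ} (hb : 0 < b)
    (h : ∀ y, |u y| ≤ C * (1 + y ^ 2) ^ k * Real.exp (-b * y ^ 2)) :
    Filter.Tendsto u Filter.atTop (nhds 0) ∧ Filter.Tendsto u Filter.atBot (nhds 0) := by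
  have hc := tendsto_poly_gauss_cocompact C k hb
  have hz : Filter.Tendsto u (Filter.cocompact ℝ) (nhds 0) := squeeze_zero_norm h hc
  rw [cocompact_eq_atBot_atTop] at hz
  exact ⟨hz.mono_left le_sup_right, hz.mono_left le_sup_left⟩

lemma hasDerivAt_gauss_half (ξ : ℝ) :
    HasDerivAt (fun ξ : ℝ => Real.exp (-ξ ^ 2 / 2)) (-ξ * Real.exp (-ξ ^ 2 / 2)) ξ := by
  have h : HasDerivAt (fun ξ : ℝ => -ξ ^ 2 / 2) (-ξ) ξ := by
    have := ((hasDerivAt_pow 2 ξ).neg).div_const 2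
    refine this.congr_deriv ?_; push_cast; ring
  have := h.exp
  convert this using 1; ring

lemma gaussian_ibp {g g' : ℝ → ℝ} (hg : ∀ ξ, HasDerivAt g (g' ξ) ξ) (hc' : Continuous g')
    {C : ℝ} {k : ℕ} (hbg : ∀ ξ, |g ξ| ≤ C * (1 + ξ ^ 2) ^ k)
    (hbg' : ∀ ξ, |g' ξ| ≤ C * (1 + ξ ^ 2) ^ k) :
    ∫ ξ : ℝ, ξ * g ξ * Real.exp (-ξ ^ 2 / 2) = ∫ ξ : ℝ, g' ξ * Real.exp (-ξ ^ 2 / 2) := by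
  have hC : 0 ≤ C := bound_nonneg hbg
  have hgc : Continuous g := by
    rw [continuous_iff_continuousAt]; exact fun ξ => (hg ξ).continuousAt
  have hbound : ∀ ξ : ℝ, |ξ * g ξ - g' ξ| ≤ 2 * C * (1 + ξ ^ 2) ^ (k + 1) := by
    intro ξ
    calc |ξ * g ξ - g' ξ| ≤ |ξ * g ξ| + |g' ξ| := abs_sub' _ _
      _ = |ξ| * |g ξ| + |g' ξ| := by rw [abs_mul]
      _ ≤ (1 + ξ ^ 2) * (C * (1 + ξ ^ 2) ^ k) + C * (1 + ξ ^ 2) ^ k := by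
          have h1 := abs_le_one_add_sq ξ
          have h2 := hbg ξ
          have h3 := hbg' ξ
          have h5 : (0:ℝ) ≤ C * (1 + ξ ^ 2) ^ k := le_trans (abs_nonneg _) h2
          have := mul_le_mul h1 h2 (abs_nonneg (g ξ)) (by nlinarith [sq_nonneg ξ])
          linarith
      _ ≤ 2 * C * (1 + ξ ^ 2) ^ (k + 1) := by
          have h1 : (1 + ξ ^ 2) ^ k ≤ (1 + ξ ^ 2) ^ (k + 1) := one_add_sq_pow_mono (by omega) ξ
          have h2 : (0:ℝ) ≤ (1 + ξ ^ 2) ^ k := by positivity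
          have h3 : (1:ℝ) ≤ 1 + ξ ^ 2 := by nlinarith [sq_nonneg ξ]
          calc (1 + ξ ^ 2) * (C * (1 + ξ ^ 2) ^ k) + C * (1 + ξ ^ 2) ^ k
              = C * (1 + ξ ^ 2) ^ (k + 1) + C * (1 + ξ ^ 2) ^ k := by ring
            _ ≤ C * (1 + ξ ^ 2) ^ (k + 1) + C * (1 + ξ ^ 2) ^ (k + 1) := by gcongr
            _ = 2 * C * (1 + ξ ^ 2) ^ (k + 1) := by ring
  have hw : Integrable (fun ξ : ℝ => (ξ * g ξ - g' ξ) * Real.exp (-ξ ^ 2 / 2)) :=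
    integrable_poly_gauss_half (by fun_prop) hbound
  have hu : ∀ ξ : ℝ, HasDerivAt (fun ξ => -(g ξ) * Real.exp (-ξ ^ 2 / 2))
      ((ξ * g ξ - g' ξ) * Real.exp (-ξ ^ 2 / 2)) ξ := by
    intro ξ
    have := ((hg ξ).neg).mul (hasDerivAt_gauss_half ξ)
    refine this.congr_deriv ?_; simp only [Pi.neg_apply]; ring
  have hulim := tendsto_gauss_poly_zero (u := fun ξ => -(g ξ) * Real.exp (-ξ ^ 2 / 2))
    (C := C) (k := k) (b := (1/2:ℝ)) (by norm_num) (fun ξ => by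
      rw [show -(1/2 : ℝ) * ξ ^ 2 = -ξ ^ 2 / 2 from by ring, abs_mul, abs_neg, Real.abs_exp]
      exact mul_le_mul_of_nonneg_right (hbg ξ) (Real.exp_nonneg _))
  have hzero := integral_eq_zero_of_hasDerivAt hu hw hulim.1 hulim.2
  have hint1 : Integrable (fun ξ : ℝ => ξ * g ξ * Real.exp (-ξ ^ 2 / 2)) := by
    apply integrable_poly_gauss_half (C := C) (k := k + 1) (by fun_prop)
    intro ξ
    calc |ξ * g ξ| = |ξ| * |g ξ| := abs_mul _ _
      _ ≤ (1 + ξ ^ 2) * (C * (1 + ξ ^ 2) ^ k) :=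
          mul_le_mul (abs_le_one_add_sq ξ) (hbg ξ) (abs_nonneg _) (by nlinarith [sq_nonneg ξ])
      _ = C * (1 + ξ ^ 2) ^ (k + 1) := by ring
  have hint2 : Integrable (fun ξ : ℝ => g' ξ * Real.exp (-ξ ^ 2 / 2)) :=
    integrable_poly_gauss_half hc' hbg'
  have hsplit : ∫ ξ : ℝ, (ξ * g ξ - g' ξ) * Real.exp (-ξ ^ 2 / 2)
      = (∫ ξ : ℝ, ξ * g ξ * Real.exp (-ξ ^ 2 / 2)) - ∫ ξ : ℝ, g' ξ * Real.exp (-ξ ^ 2 / 2) := by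
    rw [← MeasureTheory.integral_sub hint1 hint2]
    congr 1; funext ξ; ring
  rw [hsplit] at hzero
  linarith

lemma integrable_const_poly_gauss_half (c : ℝ) (k : ℕ) :
    Integrable (fun ξ : ℝ => c * (1 + ξ ^ 2) ^ k * Real.exp (-ξ ^ 2 / 2)) := by
  apply integrable_poly_gauss_half (C := |c|) (k := k) (by fun_prop)
  intro ξ
  rw [abs_mul, abs_of_nonneg (by positivity : (0:ℝ) ≤ (1 + ξ ^ 2) ^ k)]

lemma mehler_continuous {f : ℝ → ℝ} (hf : Continuous f) {C : ℝ} {k : ℕ}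
    (hb : ∀ y, |f y| ≤ C * (1 + y ^ 2) ^ k) (x : ℝ) :
    Continuous fun s => mehler s f x := by
  have hC : 0 ≤ C := bound_nonneg hb
  rw [continuous_iff_continuousAt]
  intro s₀
  unfold mehler
  refine ContinuousAt.mul continuousAt_const ?_
  set A : ℝ := Real.exp ((1 - s₀) / 2) * |x| with hA
  have hA0 : 0 ≤ A := by positivity
  apply MeasureTheory.continuousAt_of_dominated
    (bound := fun ξ : ℝ => (C * (2 ^ k * (1 + A ^ 2) ^ k)) * (1 + ξ ^ 2) ^ k
      * Real.exp (-ξ ^ 2 / 2))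
  · filter_upwards with s
    exact ((hf.comp (by fun_prop)).mul (by fun_prop)).aestronglyMeasurable
  · filter_upwards [Metric.ball_mem_nhds s₀ one_pos] with s hs
    filter_upwards with ξ
    rw [Real.norm_eq_abs, abs_mul, Real.abs_exp]
    have hs' : |s - s₀| < 1 := by
      have := Metric.mem_ball.mp hs
      rwa [Real.dist_eq] at this
    have hae : |Real.exp (-s / 2) * x| ≤ A := by
      rw [abs_mul, Real.abs_exp, hA]
      apply mul_le_mul_of_nonneg_right _ (abs_nonneg x)
      apply Real.exp_le_exp.mpr
      have := abs_lt.mp hs'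
      linarith
    calc |f (Real.exp (-s / 2) * x + Real.sqrt ((1 - Real.exp (-s)) / 2) * ξ)|
          * Real.exp (-ξ ^ 2 / 2)
        ≤ (C * (1 + (Real.exp (-s / 2) * x + Real.sqrt ((1 - Real.exp (-s)) / 2) * ξ) ^ 2) ^ k)
          * Real.exp (-ξ ^ 2 / 2) :=
          mul_le_mul_of_nonneg_right (hb _) (Real.exp_nonneg _)
      _ ≤ (C * (2 ^ k * (1 + A ^ 2) ^ k * (1 + ξ ^ 2) ^ k)) * Real.exp (-ξ ^ 2 / 2) := by
          apply mul_le_mul_of_nonneg_right _ (Real.exp_nonneg _)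
          apply mul_le_mul_of_nonneg_left _ hC
          exact sq_poly_bound A k hae
            (by rw [abs_of_nonneg (sigma_nonneg s)]; exact sigma_le_one s) ξ
      _ = (C * (2 ^ k * (1 + A ^ 2) ^ k)) * (1 + ξ ^ 2) ^ k * Real.exp (-ξ ^ 2 / 2) := by ring
  · exact integrable_const_poly_gauss_half _ _
  · filter_upwards with ξ
    exact ((hf.comp (by fun_prop)).mul continuous_const).continuousAt

lemma sigma_mono {s s' : ℝ} (h : s ≤ s') :
    Real.sqrt ((1 - Real.exp (-s)) / 2) ≤ Real.sqrt ((1 - Real.exp (-s')) / 2) := by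
  apply Real.sqrt_le_sqrt
  have := Real.exp_le_exp.mpr (neg_le_neg h)
  linarith

lemma sigma_pos {s : ℝ} (hs : 0 < s) : 0 < Real.sqrt ((1 - Real.exp (-s)) / 2) := by
  apply Real.sqrt_pos.mpr
  have : Real.exp (-s) < Real.exp 0 := Real.exp_lt_exp.mpr (by linarith)
  rw [Real.exp_zero] at this
  linarith

lemma hasDerivAt_sigma {s : ℝ} (hs : 0 < s) :
    HasDerivAt (fun s => Real.sqrt ((1 - Real.exp (-s)) / 2))
      (Real.exp (-s) / (4 * Real.sqrt ((1 - Real.exp (-s)) / 2))) s := by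
  have hinner : HasDerivAt (fun s : ℝ => (1 - Real.exp (-s)) / 2) (Real.exp (-s) / 2) s := by
    have h1 : HasDerivAt (fun s : ℝ => -s) (-1) s := (hasDerivAt_id s).neg
    have h2 := h1.exp
    have h3 := ((hasDerivAt_const s (1:ℝ)).sub h2).div_const 2
    refine h3.congr_deriv ?_; ring
  have hpos : 0 < (1 - Real.exp (-s)) / 2 := by
    have : Real.exp (-s) < Real.exp 0 := Real.exp_lt_exp.mpr (by linarith)
    rw [Real.exp_zero] at this; linarith
  have := (Real.hasDerivAt_sqrt (ne_of_gt hpos)).comp s hinner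
  refine this.congr_deriv ?_
  field_simp
  ring

set_option maxHeartbeats 2000000 in
lemma mehler_hasDerivAt {f f1 f2 : ℝ → ℝ}
    (h1 : ∀ y, HasDerivAt f (f1 y) y) (h2 : ∀ y, HasDerivAt f1 (f2 y) y)
    (hc2 : Continuous f2) {C : ℝ} {k : ℕ}
    (hb0 : ∀ y, |f y| ≤ C * (1 + y ^ 2) ^ k)
    (hb1 : ∀ y, |f1 y| ≤ C * (1 + y ^ 2) ^ k)
    (hb2 : ∀ y, |f2 y| ≤ C * (1 + y ^ 2) ^ k)
    (x : ℝ) {s₀ : ℝ} (hs₀ : 0 < s₀) :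
    HasDerivAt (fun s => mehler s f x) (mehler s₀ (OUgen f) x) s₀ := by
  have hC : 0 ≤ C := bound_nonneg hb0
  have hc0 : Continuous f := by
    rw [continuous_iff_continuousAt]; exact fun y => (h1 y).continuousAt
  have hc1 : Continuous f1 := by
    rw [continuous_iff_continuousAt]; exact fun y => (h2 y).continuousAt
  have hσ0 : 0 < Real.sqrt ((1 - Real.exp (-(s₀ / 2))) / 2) := sigma_pos (by linarith)
  set σ₀' : ℝ := Real.sqrt ((1 - Real.exp (-(s₀ / 2))) / 2) with hσ₀'def
  set K : ℝ := C * (2 ^ k * (1 + x ^ 2) ^ k) * (|x| / 2 + 1 / (4 * σ₀')) with hKdef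
  set F : ℝ → ℝ → ℝ := fun s ξ =>
    f (Real.exp (-s / 2) * x + Real.sqrt ((1 - Real.exp (-s)) / 2) * ξ)
      * Real.exp (-ξ ^ 2 / 2) with hFdef
  set F' : ℝ → ℝ → ℝ := fun s ξ =>
    f1 (Real.exp (-s / 2) * x + Real.sqrt ((1 - Real.exp (-s)) / 2) * ξ)
      * (-(1 / 2) * Real.exp (-s / 2) * x
        + Real.exp (-s) / (4 * Real.sqrt ((1 - Real.exp (-s)) / 2)) * ξ)
      * Real.exp (-ξ ^ 2 / 2) with hF'def
  have hball : ∀ s ∈ Metric.ball s₀ (s₀ / 2), s₀ / 2 < s := by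
    intro s hs
    have := Metric.mem_ball.mp hs
    rw [Real.dist_eq] at this
    have := abs_lt.mp this
    linarith
  have hyd : ∀ (ξ : ℝ), ∀ s ∈ Metric.ball s₀ (s₀ / 2),
      HasDerivAt (fun s => Real.exp (-s / 2) * x + Real.sqrt ((1 - Real.exp (-s)) / 2) * ξ)
        (-(1 / 2) * Real.exp (-s / 2) * x
          + Real.exp (-s) / (4 * Real.sqrt ((1 - Real.exp (-s)) / 2)) * ξ) s := by
    intro ξ s hs
    have hax : HasDerivAt (fun s : ℝ => Real.exp (-s / 2) * x)
        (-(1 / 2) * Real.exp (-s / 2) * x) s := by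
      have hx1 : HasDerivAt (fun s : ℝ => -s / 2) (-(1 / 2)) s := by
        have := ((hasDerivAt_id s).neg).div_const 2
        refine this.congr_deriv ?_; ring
      have := (hx1.exp).mul_const x
      refine this.congr_deriv ?_; ring
    exact hax.add ((hasDerivAt_sigma (lt_trans (by linarith) (hball s hs))).mul_const ξ)
  have hFd : ∀ (ξ : ℝ), ∀ s ∈ Metric.ball s₀ (s₀ / 2), HasDerivAt (fun s => F s ξ) (F' s ξ) s := by
    intro ξ s hs
    exact ((h1 _).comp s (hyd ξ s hs)).mul_const (Real.exp (-ξ ^ 2 / 2))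
  have h_bound : ∀ (ξ : ℝ), ∀ s ∈ Metric.ball s₀ (s₀ / 2),
      ‖F' s ξ‖ ≤ K * (1 + ξ ^ 2) ^ (k + 1) * Real.exp (-ξ ^ 2 / 2) := by
    intro ξ s hs
    have hs2 : s₀ / 2 < s := hball s hs
    have hspos : 0 < s := lt_trans (by linarith) hs2
    have he1 : Real.exp (-s / 2) ≤ 1 := by
      rw [show (1:ℝ) = Real.exp 0 from Real.exp_zero.symm]
      exact Real.exp_le_exp.mpr (by linarith)
    have he2 : Real.exp (-s) ≤ 1 := by
      rw [show (1:ℝ) = Real.exp 0 from Real.exp_zero.symm]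
      exact Real.exp_le_exp.mpr (by linarith)
    have hσs : σ₀' ≤ Real.sqrt ((1 - Real.exp (-s)) / 2) := sigma_mono (by linarith)
    have hσspos : 0 < Real.sqrt ((1 - Real.exp (-s)) / 2) := sigma_pos hspos
    have hf1b : |f1 (Real.exp (-s / 2) * x + Real.sqrt ((1 - Real.exp (-s)) / 2) * ξ)|
        ≤ C * (2 ^ k * (1 + x ^ 2) ^ k) * (1 + ξ ^ 2) ^ k := by
      calc |f1 (Real.exp (-s / 2) * x + Real.sqrt ((1 - Real.exp (-s)) / 2) * ξ)|
          ≤ C * (1 + (Real.exp (-s / 2) * x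
              + Real.sqrt ((1 - Real.exp (-s)) / 2) * ξ) ^ 2) ^ k := hb1 _
        _ ≤ C * (2 ^ k * (1 + |x| ^ 2) ^ k * (1 + ξ ^ 2) ^ k) := by
            apply mul_le_mul_of_nonneg_left _ hC
            apply sq_poly_bound |x| k _ (by rw [abs_of_nonneg (sigma_nonneg s)]; exact sigma_le_one s) ξ
            rw [abs_mul, Real.abs_exp]
            nlinarith [abs_nonneg x]
        _ = C * (2 ^ k * (1 + x ^ 2) ^ k) * (1 + ξ ^ 2) ^ k := by rw [sq_abs]; ring
    have hcoefb : |(-(1 / 2) * Real.exp (-s / 2) * x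
        + Real.exp (-s) / (4 * Real.sqrt ((1 - Real.exp (-s)) / 2)) * ξ)|
        ≤ (|x| / 2 + 1 / (4 * σ₀')) * (1 + ξ ^ 2) := by
      have habs := abs_add_le (-(1 / 2) * Real.exp (-s / 2) * x)
        (Real.exp (-s) / (4 * Real.sqrt ((1 - Real.exp (-s)) / 2)) * ξ)
      have t1 : |(-(1 / 2) * Real.exp (-s / 2) * x)| ≤ |x| / 2 := by
        rw [abs_mul, abs_mul, abs_neg, abs_of_nonneg (by norm_num : (0:ℝ) ≤ (1:ℝ)/2),
          Real.abs_exp]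
        nlinarith [abs_nonneg x, Real.exp_pos (-s / 2)]
      have t2 : |Real.exp (-s) / (4 * Real.sqrt ((1 - Real.exp (-s)) / 2)) * ξ|
          ≤ 1 / (4 * σ₀') * |ξ| := by
        rw [abs_mul, abs_div, Real.abs_exp,
          abs_of_nonneg (by positivity : (0:ℝ) ≤ 4 * Real.sqrt ((1 - Real.exp (-s)) / 2))]
        apply mul_le_mul_of_nonneg_right _ (abs_nonneg ξ)
        exact div_le_div₀ zero_le_one he2 (by positivity) (by linarith)
      have hq : 0 ≤ 1 / (4 * σ₀') := by positivity
      have hxa : 0 ≤ |x| := abs_nonneg x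
      have hξ : |ξ| ≤ 1 + ξ ^ 2 := abs_le_one_add_sq ξ
      have hξ0 : 0 ≤ |ξ| := abs_nonneg ξ
      nlinarith [sq_nonneg ξ, mul_le_mul_of_nonneg_left hξ hq]
    rw [hF'def]
    simp only [Real.norm_eq_abs]
    rw [abs_mul, abs_mul, Real.abs_exp]
    calc |f1 (Real.exp (-s / 2) * x + Real.sqrt ((1 - Real.exp (-s)) / 2) * ξ)|
          * |(-(1 / 2) * Real.exp (-s / 2) * x
            + Real.exp (-s) / (4 * Real.sqrt ((1 - Real.exp (-s)) / 2)) * ξ)|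
          * Real.exp (-ξ ^ 2 / 2)
        ≤ (C * (2 ^ k * (1 + x ^ 2) ^ k) * (1 + ξ ^ 2) ^ k)
            * ((|x| / 2 + 1 / (4 * σ₀')) * (1 + ξ ^ 2)) * Real.exp (-ξ ^ 2 / 2) := by
          apply mul_le_mul_of_nonneg_right _ (Real.exp_nonneg _)
          exact mul_le_mul hf1b hcoefb (abs_nonneg _) (by positivity)
      _ = K * (1 + ξ ^ 2) ^ (k + 1) * Real.exp (-ξ ^ 2 / 2) := by
          rw [hKdef, pow_succ]; ring
  -- apply dominated differentiation
  have hFmeas : ∀ s : ℝ, AEStronglyMeasurable (F s) volume := by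
    intro s
    exact ((hc0.comp (by fun_prop : Continuous fun ξ : ℝ => Real.exp (-s / 2) * x
        + Real.sqrt ((1 - Real.exp (-s)) / 2) * ξ)).mul
      (by fun_prop : Continuous fun ξ : ℝ => Real.exp (-ξ ^ 2 / 2))).aestronglyMeasurable
  have hF'meas : AEStronglyMeasurable (F' s₀) volume := by
    exact (((hc1.comp (by fun_prop : Continuous fun ξ : ℝ => Real.exp (-s₀ / 2) * x
        + Real.sqrt ((1 - Real.exp (-s₀)) / 2) * ξ)).mul
      (by fun_prop : Continuous fun ξ : ℝ => -(1 / 2) * Real.exp (-s₀ / 2) * x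
        + Real.exp (-s₀) / (4 * Real.sqrt ((1 - Real.exp (-s₀)) / 2)) * ξ)).mul
      (by fun_prop : Continuous fun ξ : ℝ => Real.exp (-ξ ^ 2 / 2))).aestronglyMeasurable
  have key := hasDerivAt_integral_of_dominated_loc_of_deriv_le (μ := volume) (x₀ := s₀)
    (s := Metric.ball s₀ (s₀ / 2)) (Metric.ball_mem_nhds s₀ (by linarith)) (F := F) (F' := F')
    (bound := fun ξ : ℝ => K * (1 + ξ ^ 2) ^ (k + 1) * Real.exp (-ξ ^ 2 / 2))
    (Filter.Eventually.of_forall fun s => hFmeas s)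
    (mehler_comp_integrable hc0 hb0 s₀ x)
    hF'meas
    (Filter.Eventually.of_forall fun ξ s hs => h_bound ξ s hs)
    (integrable_const_poly_gauss_half K (k + 1))
    (Filter.Eventually.of_forall fun ξ s hs => hFd ξ s hs)
  have hD := key.2.const_mul ((2 * Real.pi) ^ (-(1:ℝ) / 2))
  -- identify the derivative value
  have hσ₀pos : 0 < Real.sqrt ((1 - Real.exp (-s₀)) / 2) := sigma_pos hs₀
  have hOU : OUgen f = fun z => 1 / 4 * f2 z - z / 2 * f1 z := by
    have e1 : deriv f = f1 := funext fun y => (h1 y).deriv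
    have e2 : deriv (deriv f) = f2 := by rw [e1]; exact funext fun y => (h2 y).deriv
    funext z
    unfold OUgen
    rw [e2, e1]
  set E : ℝ := Real.exp (-s₀ / 2) with hEdef
  set S : ℝ := Real.sqrt ((1 - Real.exp (-s₀)) / 2) with hSdef
  have hexplt : Real.exp (-s₀) < 1 := by
    rw [show (1:ℝ) = Real.exp 0 from Real.exp_zero.symm]
    exact Real.exp_lt_exp.mpr (by linarith)
  have hSsq : S ^ 2 = (1 - Real.exp (-s₀)) / 2 := Real.sq_sqrt (by linarith)
  have hCb : ∀ ξ : ℝ, |f1 (E * x + S * ξ)| ≤ C * (2 ^ k * (1 + x ^ 2) ^ k) * (1 + ξ ^ 2) ^ k := by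
    intro ξ
    calc |f1 (E * x + S * ξ)| ≤ C * (1 + (E * x + S * ξ) ^ 2) ^ k := hb1 _
      _ ≤ C * (2 ^ k * (1 + |x| ^ 2) ^ k * (1 + ξ ^ 2) ^ k) := by
          apply mul_le_mul_of_nonneg_left _ hC
          apply sq_poly_bound |x| k _ (by rw [hSdef, abs_of_nonneg (sigma_nonneg s₀)]; exact sigma_le_one s₀) ξ
          rw [abs_mul, hEdef, Real.abs_exp]
          have : Real.exp (-s₀ / 2) ≤ 1 := by
            rw [show (1:ℝ) = Real.exp 0 from Real.exp_zero.symm]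
            exact Real.exp_le_exp.mpr (by linarith)
          nlinarith [abs_nonneg x]
      _ = C * (2 ^ k * (1 + x ^ 2) ^ k) * (1 + ξ ^ 2) ^ k := by rw [sq_abs]; ring
  have hCb2 : ∀ ξ : ℝ, |f2 (E * x + S * ξ) * S| ≤ C * (2 ^ k * (1 + x ^ 2) ^ k) * (1 + ξ ^ 2) ^ k := by
    intro ξ
    rw [abs_mul]
    calc |f2 (E * x + S * ξ)| * |S|
        ≤ (C * (1 + (E * x + S * ξ) ^ 2) ^ k) * 1 := by
          apply mul_le_mul (hb2 _) _ (abs_nonneg _) (by positivity)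
          rw [hSdef, abs_of_nonneg (sigma_nonneg s₀)]; exact sigma_le_one s₀
      _ = C * (1 + (E * x + S * ξ) ^ 2) ^ k := mul_one _
      _ ≤ C * (2 ^ k * (1 + |x| ^ 2) ^ k * (1 + ξ ^ 2) ^ k) := by
          apply mul_le_mul_of_nonneg_left _ hC
          apply sq_poly_bound |x| k _ (by rw [hSdef, abs_of_nonneg (sigma_nonneg s₀)]; exact sigma_le_one s₀) ξ
          rw [abs_mul, hEdef, Real.abs_exp]
          have : Real.exp (-s₀ / 2) ≤ 1 := by
            rw [show (1:ℝ) = Real.exp 0 from Real.exp_zero.symm]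
            exact Real.exp_le_exp.mpr (by linarith)
          nlinarith [abs_nonneg x]
      _ = C * (2 ^ k * (1 + x ^ 2) ^ k) * (1 + ξ ^ 2) ^ k := by rw [sq_abs]; ring
  have hg : ∀ ξ : ℝ, HasDerivAt (fun ξ => f1 (E * x + S * ξ)) (f2 (E * x + S * ξ) * S) ξ := by
    intro ξ
    have hin : HasDerivAt (fun ξ : ℝ => E * x + S * ξ) S ξ := by
      have := ((hasDerivAt_id ξ).const_mul S).const_add (E * x)
      refine this.congr_deriv ?_; ring
    exact (h2 _).comp ξ hin
  have hibp := gaussian_ibp hg ((hc2.comp (by fun_prop)).mul continuous_const) hCb hCb2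
  -- integrable pieces
  have h_i1 : Integrable (fun ξ : ℝ => f1 (E * x + S * ξ) * Real.exp (-ξ ^ 2 / 2)) :=
    mehler_comp_integrable hc1 hb1 s₀ x
  have h_i2 : Integrable (fun ξ : ℝ => f2 (E * x + S * ξ) * Real.exp (-ξ ^ 2 / 2)) :=
    mehler_comp_integrable hc2 hb2 s₀ x
  have h_j : Integrable (fun ξ : ℝ => ξ * f1 (E * x + S * ξ) * Real.exp (-ξ ^ 2 / 2)) := by
    apply integrable_poly_gauss_half (f := fun ξ : ℝ => ξ * f1 (E * x + S * ξ))
      (C := C * (2 ^ k * (1 + x ^ 2) ^ k)) (k := k + 1)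
      (by fun_prop : Continuous fun ξ : ℝ => ξ * f1 (E * x + S * ξ))
    intro ξ
    rw [abs_mul]
    calc |ξ| * |f1 (E * x + S * ξ)|
        ≤ (1 + ξ ^ 2) * (C * (2 ^ k * (1 + x ^ 2) ^ k) * (1 + ξ ^ 2) ^ k) :=
          mul_le_mul (abs_le_one_add_sq ξ) (hCb ξ) (abs_nonneg _) (by nlinarith [sq_nonneg ξ])
      _ = C * (2 ^ k * (1 + x ^ 2) ^ k) * (1 + ξ ^ 2) ^ (k + 1) := by rw [pow_succ]; ring
  -- value of ∫ F' s₀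
  have hJ : ∫ ξ : ℝ, ξ * f1 (E * x + S * ξ) * Real.exp (-ξ ^ 2 / 2)
      = S * ∫ ξ : ℝ, f2 (E * x + S * ξ) * Real.exp (-ξ ^ 2 / 2) := by
    rw [hibp, show (fun ξ : ℝ => f2 (E * x + S * ξ) * S * Real.exp (-ξ ^ 2 / 2))
      = fun ξ : ℝ => S * (f2 (E * x + S * ξ) * Real.exp (-ξ ^ 2 / 2)) from
        funext fun ξ => by ring, MeasureTheory.integral_const_mul]
  have hF'val : ∫ ξ : ℝ, F' s₀ ξ
      = -(1 / 2) * E * x * (∫ ξ : ℝ, f1 (E * x + S * ξ) * Real.exp (-ξ ^ 2 / 2))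
        + Real.exp (-s₀) / (4 * S)
          * ∫ ξ : ℝ, ξ * f1 (E * x + S * ξ) * Real.exp (-ξ ^ 2 / 2) := by
    rw [hF'def]
    rw [show (fun ξ : ℝ => f1 (Real.exp (-s₀ / 2) * x + Real.sqrt ((1 - Real.exp (-s₀)) / 2) * ξ)
        * (-(1 / 2) * Real.exp (-s₀ / 2) * x
          + Real.exp (-s₀) / (4 * Real.sqrt ((1 - Real.exp (-s₀)) / 2)) * ξ)
        * Real.exp (-ξ ^ 2 / 2))
      = fun ξ : ℝ => (-(1 / 2) * E * x) * (f1 (E * x + S * ξ) * Real.exp (-ξ ^ 2 / 2))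
        + (Real.exp (-s₀) / (4 * S)) * (ξ * f1 (E * x + S * ξ) * Real.exp (-ξ ^ 2 / 2)) from
        funext fun ξ => by rw [hEdef, hSdef]; ring]
    rw [MeasureTheory.integral_add ((h_i1.const_mul _)) ((h_j.const_mul _)),
      MeasureTheory.integral_const_mul, MeasureTheory.integral_const_mul]
  have hmval : mehler s₀ (OUgen f) x = (2 * Real.pi) ^ (-(1:ℝ) / 2)
      * ((1 / 4) * (∫ ξ : ℝ, f2 (E * x + S * ξ) * Real.exp (-ξ ^ 2 / 2))
        - E * x / 2 * (∫ ξ : ℝ, f1 (E * x + S * ξ) * Real.exp (-ξ ^ 2 / 2))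
        - S / 2 * ∫ ξ : ℝ, ξ * f1 (E * x + S * ξ) * Real.exp (-ξ ^ 2 / 2)) := by
    unfold mehler
    rw [hOU]
    congr 1
    rw [show (fun ξ : ℝ => (1 / 4 * f2 (Real.exp (-s₀ / 2) * x
          + Real.sqrt ((1 - Real.exp (-s₀)) / 2) * ξ)
        - (Real.exp (-s₀ / 2) * x + Real.sqrt ((1 - Real.exp (-s₀)) / 2) * ξ) / 2
          * f1 (Real.exp (-s₀ / 2) * x + Real.sqrt ((1 - Real.exp (-s₀)) / 2) * ξ))
        * Real.exp (-ξ ^ 2 / 2))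
      = fun ξ : ℝ => ((1 / 4) * (f2 (E * x + S * ξ) * Real.exp (-ξ ^ 2 / 2))
          - (E * x / 2) * (f1 (E * x + S * ξ) * Real.exp (-ξ ^ 2 / 2)))
        - (S / 2) * (ξ * f1 (E * x + S * ξ) * Real.exp (-ξ ^ 2 / 2)) from
        funext fun ξ => by rw [hEdef, hSdef]; ring]
    have hs1 : Integrable (fun ξ : ℝ => (1 / 4) * (f2 (E * x + S * ξ) * Real.exp (-ξ ^ 2 / 2))
        - (E * x / 2) * (f1 (E * x + S * ξ) * Real.exp (-ξ ^ 2 / 2))) :=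
      (h_i2.const_mul _).sub (h_i1.const_mul _)
    rw [MeasureTheory.integral_sub hs1 (h_j.const_mul _),
      MeasureTheory.integral_sub (h_i2.const_mul _) (h_i1.const_mul _),
      MeasureTheory.integral_const_mul, MeasureTheory.integral_const_mul,
      MeasureTheory.integral_const_mul]
  have hveq : (2 * Real.pi) ^ (-(1:ℝ) / 2) * ∫ ξ : ℝ, F' s₀ ξ = mehler s₀ (OUgen f) x := by
    rw [hF'val, hmval, hJ]
    have hSne : S ≠ 0 := ne_of_gt hσ₀pos
    have hcoefeq : Real.exp (-s₀) / (4 * S) * S = 1 / 4 - S ^ 2 / 2 := by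
      rw [hSsq]; field_simp; ring
    have hrw : Real.exp (-s₀) / (4 * S)
        * (S * ∫ ξ : ℝ, f2 (E * x + S * ξ) * Real.exp (-ξ ^ 2 / 2))
        = (1 / 4 - S ^ 2 / 2) * ∫ ξ : ℝ, f2 (E * x + S * ξ) * Real.exp (-ξ ^ 2 / 2) := by
      rw [← mul_assoc, hcoefeq]
    rw [hrw]
    ring
  have hD' : HasDerivAt (fun s => mehler s f x)
      ((2 * Real.pi) ^ (-(1:ℝ) / 2) * ∫ ξ : ℝ, F' s₀ ξ) s₀ := hD
  rw [hveq] at hD'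
  exact hD'

lemma integral_OUgen_weight_zero {f f1 f2 : ℝ → ℝ}
    (h1 : ∀ y, HasDerivAt f (f1 y) y) (h2 : ∀ y, HasDerivAt f1 (f2 y) y)
    (hc2 : Continuous f2) {C : ℝ} {k : ℕ}
    (hb1 : ∀ y, |f1 y| ≤ C * (1 + y ^ 2) ^ k) (hb2 : ∀ y, |f2 y| ≤ C * (1 + y ^ 2) ^ k) :
    ∫ y : ℝ, OUgen f y * Real.exp (-y ^ 2) = 0 := by
  have hC : 0 ≤ C := bound_nonneg hb1
  have hc1 : Continuous f1 := by
    rw [continuous_iff_continuousAt]; exact fun y => (h2 y).continuousAt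
  have hOU : OUgen f = fun z => 1 / 4 * f2 z - z / 2 * f1 z := by
    have e1 : deriv f = f1 := funext fun y => (h1 y).deriv
    have e2 : deriv (deriv f) = f2 := by rw [e1]; exact funext fun y => (h2 y).deriv
    funext z
    unfold OUgen
    rw [e2, e1]
  have hgauss : ∀ y : ℝ, HasDerivAt (fun y : ℝ => Real.exp (-y ^ 2))
      (-2 * y * Real.exp (-y ^ 2)) y := by
    intro y
    have h : HasDerivAt (fun y : ℝ => -y ^ 2) (-2 * y) y := by
      have := (hasDerivAt_pow 2 y).neg
      refine this.congr_deriv ?_; push_cast; ring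
    have := h.exp
    convert this using 1; ring
  have hu : ∀ y : ℝ, HasDerivAt (fun y => 1 / 4 * f1 y * Real.exp (-y ^ 2))
      (OUgen f y * Real.exp (-y ^ 2)) y := by
    intro y
    have := (((h2 y).const_mul (1/4 : ℝ)).mul (hgauss y))
    refine this.congr_deriv ?_
    rw [hOU]
    ring
  have hbOU : ∀ y : ℝ, |OUgen f y| ≤ 2 * C * (1 + y ^ 2) ^ (k + 1) := by
    intro y
    rw [hOU]
    calc |1 / 4 * f2 y - y / 2 * f1 y| ≤ |1 / 4 * f2 y| + |y / 2 * f1 y| := abs_sub' _ _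
      _ ≤ C * (1 + y ^ 2) ^ k + (1 + y ^ 2) * (C * (1 + y ^ 2) ^ k) := by
          apply add_le_add
          · rw [abs_mul, abs_of_nonneg (by norm_num : (0:ℝ) ≤ (1:ℝ)/4)]
            nlinarith [hb2 y, abs_nonneg (f2 y), pow_nonneg (by nlinarith [sq_nonneg y] : (0:ℝ) ≤ 1 + y ^ 2) k]
          · rw [abs_mul, abs_div, abs_of_nonneg (by norm_num : (0:ℝ) ≤ (2:ℝ))]
            calc |y| / 2 * |f1 y| ≤ |y| * |f1 y| := by
                  nlinarith [abs_nonneg y, abs_nonneg (f1 y)]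
              _ ≤ (1 + y ^ 2) * (C * (1 + y ^ 2) ^ k) :=
                  mul_le_mul (abs_le_one_add_sq y) (hb1 y) (abs_nonneg _) (by nlinarith [sq_nonneg y])
      _ ≤ 2 * C * (1 + y ^ 2) ^ (k + 1) := by
          have h1' : (1 + y ^ 2) ^ k ≤ (1 + y ^ 2) ^ (k + 1) := one_add_sq_pow_mono (by omega) y
          have h2' : (0:ℝ) ≤ (1 + y ^ 2) ^ k := by positivity
          nlinarith [sq_nonneg y, pow_succ (1 + y ^ 2) k, mul_le_mul_of_nonneg_left h1' hC]
  have hw : Integrable (fun y : ℝ => OUgen f y * Real.exp (-y ^ 2)) := by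
    apply integrable_poly_gauss_one _ hbOU
    rw [hOU]
    fun_prop
  have hulim := tendsto_gauss_poly_zero (u := fun y => 1 / 4 * f1 y * Real.exp (-y ^ 2))
    (C := C) (k := k) (b := (1:ℝ)) (by norm_num) (fun y => by
      rw [show -(1:ℝ) * y ^ 2 = -y ^ 2 from by ring, abs_mul, abs_mul, Real.abs_exp,
        abs_of_nonneg (by norm_num : (0:ℝ) ≤ (1:ℝ)/4)]
      nlinarith [hb1 y, abs_nonneg (f1 y), Real.exp_pos (-y ^ 2),
        mul_le_mul_of_nonneg_right (hb1 y) (Real.exp_nonneg (-y ^ 2)),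
        pow_nonneg (by nlinarith [sq_nonneg y] : (0:ℝ) ≤ 1 + y ^ 2) k])
  exact integral_eq_zero_of_hasDerivAt hu hw hulim.1 hulim.2

lemma bound_weaken {f : ℝ → ℝ} {A B : ℝ} {k : ℕ}
    (h : ∀ x, |f x| ≤ A * (1 + x ^ 2) ^ k) (hAB : A ≤ B) :
    ∀ x, |f x| ≤ B * (1 + x ^ 2) ^ k := fun x =>
  (h x).trans (mul_le_mul_of_nonneg_right hAB (by positivity))

lemma comb_bound {a b c : ℝ → ℝ} {Ca Cb Cc : ℝ} {k : ℕ} (α β : ℝ)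
    (ha : ∀ x, |a x| ≤ Ca * (1 + x ^ 2) ^ k) (hb : ∀ x, |b x| ≤ Cb * (1 + x ^ 2) ^ k)
    (hc : ∀ x, |c x| ≤ Cc * (1 + x ^ 2) ^ k) :
    ∀ x, |α * a x - β * b x - x / 2 * c x|
      ≤ (|α| * Ca + |β| * Cb + Cc) * (1 + x ^ 2) ^ (k + 1) := by
  intro x
  have hCa : 0 ≤ Ca := bound_nonneg ha
  have hCb : 0 ≤ Cb := bound_nonneg hb
  have hCc : 0 ≤ Cc := bound_nonneg hc
  have hone : (1:ℝ) ≤ 1 + x ^ 2 := by nlinarith [sq_nonneg x]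
  have hpk : (0:ℝ) ≤ (1 + x ^ 2) ^ k := by positivity
  have hmono : (1 + x ^ 2) ^ k ≤ (1 + x ^ 2) ^ (k + 1) := one_add_sq_pow_mono (by omega) x
  have tri : |α * a x - β * b x - x / 2 * c x|
      ≤ |α * a x| + |β * b x| + |x / 2 * c x| := by
    calc |α * a x - β * b x - x / 2 * c x|
        ≤ |α * a x - β * b x| + |x / 2 * c x| := abs_sub' _ _
      _ ≤ |α * a x| + |β * b x| + |x / 2 * c x| := by
          have := abs_sub' (α * a x) (β * b x); linarith
  have t1 : |α * a x| ≤ |α| * Ca * (1 + x ^ 2) ^ (k + 1) := by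
    rw [abs_mul]
    calc |α| * |a x| ≤ |α| * (Ca * (1 + x ^ 2) ^ k) :=
          mul_le_mul_of_nonneg_left (ha x) (abs_nonneg α)
      _ = |α| * Ca * (1 + x ^ 2) ^ k := by ring
      _ ≤ |α| * Ca * (1 + x ^ 2) ^ (k + 1) := by
          apply mul_le_mul_of_nonneg_left hmono (by positivity)
  have t2 : |β * b x| ≤ |β| * Cb * (1 + x ^ 2) ^ (k + 1) := by
    rw [abs_mul]
    calc |β| * |b x| ≤ |β| * (Cb * (1 + x ^ 2) ^ k) :=
          mul_le_mul_of_nonneg_left (hb x) (abs_nonneg β)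
      _ = |β| * Cb * (1 + x ^ 2) ^ k := by ring
      _ ≤ |β| * Cb * (1 + x ^ 2) ^ (k + 1) := by
          apply mul_le_mul_of_nonneg_left hmono (by positivity)
  have t3 : |x / 2 * c x| ≤ Cc * (1 + x ^ 2) ^ (k + 1) := by
    rw [abs_mul, abs_div, abs_of_nonneg (by norm_num : (0:ℝ) ≤ (2:ℝ))]
    calc |x| / 2 * |c x| ≤ (1 + x ^ 2) * (Cc * (1 + x ^ 2) ^ k) := by
          apply mul_le_mul _ (hc x) (abs_nonneg _) (by linarith)
          have := abs_le_one_add_sq x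
          nlinarith [abs_nonneg x]
      _ = Cc * (1 + x ^ 2) ^ (k + 1) := by rw [pow_succ]; ring
  calc |α * a x - β * b x - x / 2 * c x| ≤ |α * a x| + |β * b x| + |x / 2 * c x| := tri
    _ ≤ (|α| * Ca + |β| * Cb + Cc) * (1 + x ^ 2) ^ (k + 1) := by linarith

lemma mehler_le_const_mul {f g : ℝ → ℝ} (a s x : ℝ)
    (hfi : Integrable (fun ξ : ℝ => f (Real.exp (-s / 2) * x
      + Real.sqrt ((1 - Real.exp (-s)) / 2) * ξ) * Real.exp (-ξ ^ 2 / 2)))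
    (hgi : Integrable (fun ξ : ℝ => g (Real.exp (-s / 2) * x
      + Real.sqrt ((1 - Real.exp (-s)) / 2) * ξ) * Real.exp (-ξ ^ 2 / 2)))
    (h : ∀ y, f y ≤ a * g y) : mehler s f x ≤ a * mehler s g x := by
  rw [← mehler_const_mul]
  apply mehler_mono s x hfi _ h
  simpa [mul_assoc] using hgi.const_mul a

lemma mehler_const_mul_le {f g : ℝ → ℝ} (a s x : ℝ)
    (hgi : Integrable (fun ξ : ℝ => g (Real.exp (-s / 2) * x
      + Real.sqrt ((1 - Real.exp (-s)) / 2) * ξ) * Real.exp (-ξ ^ 2 / 2)))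
    (hfi : Integrable (fun ξ : ℝ => f (Real.exp (-s / 2) * x
      + Real.sqrt ((1 - Real.exp (-s)) / 2) * ξ) * Real.exp (-ξ ^ 2 / 2)))
    (h : ∀ y, a * g y ≤ f y) : a * mehler s g x ≤ mehler s f x := by
  rw [← mehler_const_mul]
  apply mehler_mono s x _ hfi h
  simpa [mul_assoc] using hgi.const_mul a

lemma integral_gaussMeasure (g : ℝ → ℝ) :
    ∫ x, g x ∂gaussMeasure = ∫ x : ℝ, Real.exp (-x ^ 2) * g x := by
  unfold gaussMeasure
  have hmeas : Measurable fun x : ℝ => Real.toNNReal (Real.exp (-x ^ 2)) :=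
    ((by fun_prop : Continuous fun x : ℝ => Real.exp (-x ^ 2))).measurable.real_toNNReal
  rw [show (fun x : ℝ => ENNReal.ofReal (Real.exp (-x ^ 2)))
      = (fun x : ℝ => ((Real.toNNReal (Real.exp (-x ^ 2)) : NNReal) : ENNReal)) from rfl]
  rw [integral_withDensity_eq_integral_smul hmeas g]
  congr 1
  funext x
  rw [NNReal.smul_def, Real.coe_toNNReal _ (Real.exp_nonneg _), smul_eq_mul]

lemma hasDerivAt_comb {a b c : ℝ → ℝ} {a' b' c' : ℝ} (α β : ℝ) {y : ℝ}
    (ha : HasDerivAt a a' y) (hb : HasDerivAt b b' y) (hc : HasDerivAt c c' y) :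
    HasDerivAt (fun y => α * a y - β * b y - y / 2 * c y)
      (α * a' - β * b' - (1 / 2 * c y + y / 2 * c')) y := by
  have h := ((ha.const_mul α).sub (hb.const_mul β)).sub
    (((hasDerivAt_id' y).div_const 2).mul hc)
  exact h

lemma continuous_comb {a b c : ℝ → ℝ} (α β : ℝ)
    (ha : Continuous a) (hb : Continuous b) (hc : Continuous c) :
    Continuous (fun y => α * a y - β * b y - y / 2 * c y) := by fun_prop

lemma bound_pad {f : ℝ → ℝ} {A : ℝ} {k k' : ℕ}
    (h : ∀ x, |f x| ≤ A * (1 + x ^ 2) ^ k) (hk : k ≤ k') :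
    ∀ x, |f x| ≤ A * (1 + x ^ 2) ^ k' := fun x =>
  (h x).trans (mul_le_mul_of_nonneg_left (one_add_sq_pow_mono hk x) (bound_nonneg h))

set_option maxHeartbeats 1600000 in
/-- Approximate time reversal, lower bound: under `Lv ≤ A₁v`, `L²v ≥ −A₂v`,
`|L³v| ≤ A₃v` and the smallness conditions `tA₁ + t²A₂/2 ≤ 1`, `t³A₃ ≤ 1`,
the function `g_t = (1 − tL + t²L²/2)v` is a probability density w.r.t. `μ`, and
`v_t = e^{tL}g_t` satisfies `v_t ≥ (1 − t³A₃e^{tA₁}/6)v ≥ v/2` pointwise. -/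
theorem approximate_time_reversal_lower_bound
    (v : ℝ → ℝ) (hv : ContDiff ℝ 6 v) (hpos : ∀ x, 0 < v x)
    (hgrowth : ∃ (C : ℝ) (k : ℕ), ∀ x : ℝ,
      ∑ j ∈ Finset.range 7, |iteratedDeriv j v x| ≤ C * (1 + x ^ 2) ^ k)
    (hprob : ∫ x, v x ∂gaussMeasure = 1)
    (A₁ A₂ A₃ : ℝ) (hA₁ : 0 ≤ A₁) (hA₂ : 0 ≤ A₂) (hA₃ : 0 ≤ A₃)
    (hL1 : ∀ x, OUgen v x ≤ A₁ * v x)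
    (hL2 : ∀ x, -A₂ * v x ≤ OUgen (OUgen v) x)
    (hL3 : ∀ x, |OUgen (OUgen (OUgen v)) x| ≤ A₃ * v x)
    (t : ℝ) (ht : 0 < t) (htA : t * A₁ + t ^ 2 / 2 * A₂ ≤ 1) (htA3 : t ^ 3 * A₃ ≤ 1) :
    (∀ x, 0 ≤ v x - t * OUgen v x + t ^ 2 / 2 * OUgen (OUgen v) x) ∧
      (∫ x, (v x - t * OUgen v x + t ^ 2 / 2 * OUgen (OUgen v) x) ∂gaussMeasure = 1) ∧
      (∀ x, (1 - (1 / 6) * t ^ 3 * A₃ * Real.exp (t * A₁)) * v x ≤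
          mehler t (fun z => v z - t * OUgen v z + t ^ 2 / 2 * OUgen (OUgen v) z) x) ∧
      (∀ x, (1 / 2) * v x ≤ (1 - (1 / 6) * t ^ 3 * A₃ * Real.exp (t * A₁)) * v x) := by
  obtain ⟨C, k, hgr⟩ := hgrowth
  have hdb : ∀ n : ℕ, n < 7 → ∀ x : ℝ, |iteratedDeriv n v x| ≤ C * (1 + x ^ 2) ^ k := by
    intro n hn x
    exact le_trans (Finset.single_le_sum (f := fun j => |iteratedDeriv j v x|)
      (fun j _ => abs_nonneg _) (Finset.mem_range.mpr hn)) (hgr x)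
  have hC : 0 ≤ C := bound_nonneg (hdb 0 (by norm_num))
  have hcd : ∀ n : ℕ, n ≤ 6 → Continuous (iteratedDeriv n v) := by
    intro n hn
    exact hv.continuous_iteratedDeriv n (by exact_mod_cast hn)
  have hd : ∀ n : ℕ, n < 6 → ∀ y : ℝ,
      HasDerivAt (iteratedDeriv n v) (iteratedDeriv (n + 1) v y) y := by
    intro n hn y
    rw [iteratedDeriv_succ]
    exact ((hv.differentiable_iteratedDeriv n (by exact_mod_cast hn)) y).hasDerivAt
  have hd0 : ∀ y : ℝ, HasDerivAt v (iteratedDeriv 1 v y) y := by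
    intro y
    have h := hd 0 (by norm_num) y
    rwa [iteratedDeriv_zero] at h
  have hbv : ∀ x : ℝ, |v x| ≤ C * (1 + x ^ 2) ^ k := by
    intro x
    have h := hdb 0 (by norm_num) x
    rwa [iteratedDeriv_zero] at h
  have e1 : deriv v = iteratedDeriv 1 v := iteratedDeriv_one.symm
  have e2 : deriv (deriv v) = iteratedDeriv 2 v := by
    rw [show (2 : ℕ) = 1 + 1 from rfl, iteratedDeriv_succ, iteratedDeriv_one]
  have hL1eq : OUgen v = fun y => 1 / 4 * iteratedDeriv 2 v y - 0 * v y - y / 2 * iteratedDeriv 1 v y := by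
    funext y
    unfold OUgen
    rw [e2, e1]
    ring
  have hdL1 : ∀ y : ℝ, HasDerivAt (OUgen v) ((1 / 4 * iteratedDeriv 3 v y - 1 / 2 * iteratedDeriv 1 v y - y / 2 * iteratedDeriv 2 v y)) y := by
    intro y
    rw [hL1eq]
    have h := hasDerivAt_comb (1 / 4) 0 (hd 2 (by norm_num) y) (hd0 y) (hd 1 (by norm_num) y)
    convert h using 1
    ring
  have hdP1 : ∀ y : ℝ, HasDerivAt (fun y => 1 / 4 * iteratedDeriv 3 v y - 1 / 2 * iteratedDeriv 1 v y - y / 2 * iteratedDeriv 2 v y) ((1 / 4 * iteratedDeriv 4 v y - 1 * iteratedDeriv 2 v y - y / 2 * iteratedDeriv 3 v y)) y := by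
    intro y
    have h := hasDerivAt_comb (1 / 4) (1 / 2) (hd 3 (by norm_num) y) (hd 1 (by norm_num) y)
      (hd 2 (by norm_num) y)
    convert h using 1
    ring
  have hdP2 : ∀ y : ℝ, HasDerivAt (fun y => 1 / 4 * iteratedDeriv 4 v y - 1 * iteratedDeriv 2 v y - y / 2 * iteratedDeriv 3 v y) ((1 / 4 * iteratedDeriv 5 v y - 3 / 2 * iteratedDeriv 3 v y - y / 2 * iteratedDeriv 4 v y)) y := by
    intro y
    have h := hasDerivAt_comb (1 / 4) 1 (hd 4 (by norm_num) y) (hd 2 (by norm_num) y)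
      (hd 3 (by norm_num) y)
    convert h using 1
    ring
  have hdP3 : ∀ y : ℝ, HasDerivAt (fun y => 1 / 4 * iteratedDeriv 5 v y - 3 / 2 * iteratedDeriv 3 v y - y / 2 * iteratedDeriv 4 v y) ((1 / 4 * iteratedDeriv 6 v y - 2 * iteratedDeriv 4 v y - y / 2 * iteratedDeriv 5 v y)) y := by
    intro y
    have h := hasDerivAt_comb (1 / 4) (3 / 2) (hd 5 (by norm_num) y) (hd 3 (by norm_num) y)
      (hd 4 (by norm_num) y)
    convert h using 1
    ring
  have hL2eq : OUgen (OUgen v) = fun y => 1 / 4 * (1 / 4 * iteratedDeriv 4 v y - 1 * iteratedDeriv 2 v y - y / 2 * iteratedDeriv 3 v y) - 0 * v y - y / 2 * (1 / 4 * iteratedDeriv 3 v y - 1 / 2 * iteratedDeriv 1 v y - y / 2 * iteratedDeriv 2 v y) := by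
    have f1 : deriv (OUgen v) = fun y => 1 / 4 * iteratedDeriv 3 v y - 1 / 2 * iteratedDeriv 1 v y - y / 2 * iteratedDeriv 2 v y := funext fun y => (hdL1 y).deriv
    have f2 : deriv (fun y => 1 / 4 * iteratedDeriv 3 v y - 1 / 2 * iteratedDeriv 1 v y - y / 2 * iteratedDeriv 2 v y) = fun y => 1 / 4 * iteratedDeriv 4 v y - 1 * iteratedDeriv 2 v y - y / 2 * iteratedDeriv 3 v y := funext fun y => (hdP1 y).deriv
    funext y
    have h0 : OUgen (OUgen v) y
        = 1 / 4 * deriv (deriv (OUgen v)) y - y / 2 * deriv (OUgen v) y := rfl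
    rw [h0, f1, f2]
    ring
  have hdL2 : ∀ y : ℝ, HasDerivAt (OUgen (OUgen v)) ((1 / 4 * (1 / 4 * iteratedDeriv 5 v y - 3 / 2 * iteratedDeriv 3 v y - y / 2 * iteratedDeriv 4 v y) - 1 / 2 * (1 / 4 * iteratedDeriv 3 v y - 1 / 2 * iteratedDeriv 1 v y - y / 2 * iteratedDeriv 2 v y) - y / 2 * (1 / 4 * iteratedDeriv 4 v y - 1 * iteratedDeriv 2 v y - y / 2 * iteratedDeriv 3 v y))) y := by
    intro y
    rw [hL2eq]
    have h := hasDerivAt_comb (1 / 4) 0 (hdP2 y) (hd0 y) (hdP1 y)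
    convert h using 1
    ring
  have hdQ1 : ∀ y : ℝ, HasDerivAt (fun y => 1 / 4 * (1 / 4 * iteratedDeriv 5 v y - 3 / 2 * iteratedDeriv 3 v y - y / 2 * iteratedDeriv 4 v y) - 1 / 2 * (1 / 4 * iteratedDeriv 3 v y - 1 / 2 * iteratedDeriv 1 v y - y / 2 * iteratedDeriv 2 v y) - y / 2 * (1 / 4 * iteratedDeriv 4 v y - 1 * iteratedDeriv 2 v y - y / 2 * iteratedDeriv 3 v y)) ((1 / 4 * (1 / 4 * iteratedDeriv 6 v y - 2 * iteratedDeriv 4 v y - y / 2 * iteratedDeriv 5 v y) - 1 * (1 / 4 * iteratedDeriv 4 v y - 1 * iteratedDeriv 2 v y - y / 2 * iteratedDeriv 3 v y) - y / 2 * (1 / 4 * iteratedDeriv 5 v y - 3 / 2 * iteratedDeriv 3 v y - y / 2 * iteratedDeriv 4 v y))) y := by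
    intro y
    have h := hasDerivAt_comb (1 / 4) (1 / 2) (hdP3 y) (hdP1 y) (hdP2 y)
    convert h using 1
    ring
  have hL3eq : OUgen (OUgen (OUgen v)) = fun y => 1 / 4 * (1 / 4 * (1 / 4 * iteratedDeriv 6 v y - 2 * iteratedDeriv 4 v y - y / 2 * iteratedDeriv 5 v y) - 1 * (1 / 4 * iteratedDeriv 4 v y - 1 * iteratedDeriv 2 v y - y / 2 * iteratedDeriv 3 v y) - y / 2 * (1 / 4 * iteratedDeriv 5 v y - 3 / 2 * iteratedDeriv 3 v y - y / 2 * iteratedDeriv 4 v y)) - 0 * v y - y / 2 * (1 / 4 * (1 / 4 * iteratedDeriv 5 v y - 3 / 2 * iteratedDeriv 3 v y - y / 2 * iteratedDeriv 4 v y) - 1 / 2 * (1 / 4 * iteratedDeriv 3 v y - 1 / 2 * iteratedDeriv 1 v y - y / 2 * iteratedDeriv 2 v y) - y / 2 * (1 / 4 * iteratedDeriv 4 v y - 1 * iteratedDeriv 2 v y - y / 2 * iteratedDeriv 3 v y)) := by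
    have f1 : deriv (OUgen (OUgen v)) = fun y => 1 / 4 * (1 / 4 * iteratedDeriv 5 v y - 3 / 2 * iteratedDeriv 3 v y - y / 2 * iteratedDeriv 4 v y) - 1 / 2 * (1 / 4 * iteratedDeriv 3 v y - 1 / 2 * iteratedDeriv 1 v y - y / 2 * iteratedDeriv 2 v y) - y / 2 * (1 / 4 * iteratedDeriv 4 v y - 1 * iteratedDeriv 2 v y - y / 2 * iteratedDeriv 3 v y) := funext fun y => (hdL2 y).deriv
    have f2 : deriv (fun y => 1 / 4 * (1 / 4 * iteratedDeriv 5 v y - 3 / 2 * iteratedDeriv 3 v y - y / 2 * iteratedDeriv 4 v y) - 1 / 2 * (1 / 4 * iteratedDeriv 3 v y - 1 / 2 * iteratedDeriv 1 v y - y / 2 * iteratedDeriv 2 v y) - y / 2 * (1 / 4 * iteratedDeriv 4 v y - 1 * iteratedDeriv 2 v y - y / 2 * iteratedDeriv 3 v y)) = fun y => 1 / 4 * (1 / 4 * iteratedDeriv 6 v y - 2 * iteratedDeriv 4 v y - y / 2 * iteratedDeriv 5 v y) - 1 * (1 / 4 * iteratedDeriv 4 v y - 1 * iteratedDeriv 2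 v y - y / 2 * iteratedDeriv 3 v y) - y / 2 * (1 / 4 * iteratedDeriv 5 v y - 3 / 2 * iteratedDeriv 3 v y - y / 2 * iteratedDeriv 4 v y) := funext fun y => (hdQ1 y).deriv
    funext y
    have h0 : OUgen (OUgen (OUgen v)) y
        = 1 / 4 * deriv (deriv (OUgen (OUgen v))) y - y / 2 * deriv (OUgen (OUgen v)) y := rfl
    rw [h0, f1, f2]
    ring
  have cP1 : Continuous (fun y => 1 / 4 * iteratedDeriv 3 v y - 1 / 2 * iteratedDeriv 1 v y - y / 2 * iteratedDeriv 2 v y) :=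
    continuous_comb _ _ (hcd 3 (by norm_num)) (hcd 1 (by norm_num)) (hcd 2 (by norm_num))
  have cP2 : Continuous (fun y => 1 / 4 * iteratedDeriv 4 v y - 1 * iteratedDeriv 2 v y - y / 2 * iteratedDeriv 3 v y) :=
    continuous_comb _ _ (hcd 4 (by norm_num)) (hcd 2 (by norm_num)) (hcd 3 (by norm_num))
  have cP3 : Continuous (fun y => 1 / 4 * iteratedDeriv 5 v y - 3 / 2 * iteratedDeriv 3 v y - y / 2 * iteratedDeriv 4 v y) :=
    continuous_comb _ _ (hcd 5 (by norm_num)) (hcd 3 (by norm_num)) (hcd 4 (by norm_num))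
  have cP4 : Continuous (fun y => 1 / 4 * iteratedDeriv 6 v y - 2 * iteratedDeriv 4 v y - y / 2 * iteratedDeriv 5 v y) :=
    continuous_comb _ _ (hcd 6 (by norm_num)) (hcd 4 (by norm_num)) (hcd 5 (by norm_num))
  have cQ1 : Continuous (fun y => 1 / 4 * (1 / 4 * iteratedDeriv 5 v y - 3 / 2 * iteratedDeriv 3 v y - y / 2 * iteratedDeriv 4 v y) - 1 / 2 * (1 / 4 * iteratedDeriv 3 v y - 1 / 2 * iteratedDeriv 1 v y - y / 2 * iteratedDeriv 2 v y) - y / 2 * (1 / 4 * iteratedDeriv 4 v y - 1 * iteratedDeriv 2 v y - y / 2 * iteratedDeriv 3 v y)) := continuous_comb _ _ cP3 cP1 cP2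
  have cQ2 : Continuous (fun y => 1 / 4 * (1 / 4 * iteratedDeriv 6 v y - 2 * iteratedDeriv 4 v y - y / 2 * iteratedDeriv 5 v y) - 1 * (1 / 4 * iteratedDeriv 4 v y - 1 * iteratedDeriv 2 v y - y / 2 * iteratedDeriv 3 v y) - y / 2 * (1 / 4 * iteratedDeriv 5 v y - 3 / 2 * iteratedDeriv 3 v y - y / 2 * iteratedDeriv 4 v y)) := continuous_comb _ _ cP4 cP2 cP3
  have cL1 : Continuous (OUgen v) := by
    rw [hL1eq]
    exact continuous_comb _ _ (hcd 2 (by norm_num)) (hv.continuous) (hcd 1 (by norm_num))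
  have cL2 : Continuous (OUgen (OUgen v)) := by
    rw [hL2eq]
    exact continuous_comb _ _ cP2 (hv.continuous) cP1
  have cL3 : Continuous (OUgen (OUgen (OUgen v))) := by
    rw [hL3eq]
    exact continuous_comb _ _ cQ2 (hv.continuous) cQ1
  have bP1 := bound_weaken (comb_bound (1 / 4) (1 / 2) (hdb 3 (by norm_num))
    (hdb 1 (by norm_num)) (hdb 2 (by norm_num)))
    (show |(1/4 : ℝ)| * C + |(1/2 : ℝ)| * C + C ≤ 4 * C by
      rw [abs_of_nonneg (by norm_num : (0:ℝ) ≤ 1/4), abs_of_nonneg (by norm_num : (0:ℝ) ≤ 1/2)]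
      linarith)
  have bP2 := bound_weaken (comb_bound (1 / 4) 1 (hdb 4 (by norm_num))
    (hdb 2 (by norm_num)) (hdb 3 (by norm_num)))
    (show |(1/4 : ℝ)| * C + |(1 : ℝ)| * C + C ≤ 4 * C by
      rw [abs_of_nonneg (by norm_num : (0:ℝ) ≤ 1/4), abs_of_nonneg (by norm_num : (0:ℝ) ≤ (1:ℝ))]
      linarith)
  have bP3 := bound_weaken (comb_bound (1 / 4) (3 / 2) (hdb 5 (by norm_num))
    (hdb 3 (by norm_num)) (hdb 4 (by norm_num)))
    (show |(1/4 : ℝ)| * C + |(3/2 : ℝ)| * C + C ≤ 4 * C by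
      rw [abs_of_nonneg (by norm_num : (0:ℝ) ≤ 1/4), abs_of_nonneg (by norm_num : (0:ℝ) ≤ 3/2)]
      linarith)
  have bP4 := bound_weaken (comb_bound (1 / 4) 2 (hdb 6 (by norm_num))
    (hdb 4 (by norm_num)) (hdb 5 (by norm_num)))
    (show |(1/4 : ℝ)| * C + |(2 : ℝ)| * C + C ≤ 4 * C by
      rw [abs_of_nonneg (by norm_num : (0:ℝ) ≤ 1/4), abs_of_nonneg (by norm_num : (0:ℝ) ≤ (2:ℝ))]
      linarith)
  have bL1 : ∀ x : ℝ, |OUgen v x| ≤ 4 * C * (1 + x ^ 2) ^ (k + 1) := by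
    rw [hL1eq]
    exact bound_weaken (comb_bound (1 / 4) 0 (hdb 2 (by norm_num)) hbv (hdb 1 (by norm_num)))
      (show |(1/4 : ℝ)| * C + |(0 : ℝ)| * C + C ≤ 4 * C by
        rw [abs_of_nonneg (by norm_num : (0:ℝ) ≤ 1/4), abs_zero]
        linarith)
  have bvp : ∀ x : ℝ, |v x| ≤ 4 * C * (1 + x ^ 2) ^ (k + 1) :=
    bound_weaken (bound_pad hbv (Nat.le_succ k)) (by linarith)
  have bQ1 := bound_weaken (comb_bound (1 / 4) (1 / 2) bP3 bP1 bP2)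
    (show |(1/4 : ℝ)| * (4 * C) + |(1/2 : ℝ)| * (4 * C) + 4 * C ≤ 9 * C by
      rw [abs_of_nonneg (by norm_num : (0:ℝ) ≤ 1/4), abs_of_nonneg (by norm_num : (0:ℝ) ≤ 1/2)]
      linarith)
  have bQ2 := bound_weaken (comb_bound (1 / 4) 1 bP4 bP2 bP3)
    (show |(1/4 : ℝ)| * (4 * C) + |(1 : ℝ)| * (4 * C) + 4 * C ≤ 9 * C by
      rw [abs_of_nonneg (by norm_num : (0:ℝ) ≤ 1/4), abs_of_nonneg (by norm_num : (0:ℝ) ≤ (1:ℝ))]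
      linarith)
  have bL2 : ∀ x : ℝ, |OUgen (OUgen v) x| ≤ 9 * C * (1 + x ^ 2) ^ (k + 1 + 1) := by
    rw [hL2eq]
    exact bound_weaken (comb_bound (1 / 4) 0 bP2 bvp bP1)
      (show |(1/4 : ℝ)| * (4 * C) + |(0 : ℝ)| * (4 * C) + 4 * C ≤ 9 * C by
        rw [abs_of_nonneg (by norm_num : (0:ℝ) ≤ 1/4), abs_zero]
        linarith)
  have bL3 : ∀ x : ℝ, |OUgen (OUgen (OUgen v)) x| ≤ A₃ * C * (1 + x ^ 2) ^ k := by
    intro x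
    calc |OUgen (OUgen (OUgen v)) x| ≤ A₃ * v x := hL3 x
      _ ≤ A₃ * |v x| := mul_le_mul_of_nonneg_left (le_abs_self _) hA₃
      _ ≤ A₃ * (C * (1 + x ^ 2) ^ k) := mul_le_mul_of_nonneg_left (hbv x) hA₃
      _ = A₃ * C * (1 + x ^ 2) ^ k := by ring
  have hMv : ∀ (x s : ℝ), 0 < s →
      HasDerivAt (fun s => mehler s v x) (mehler s (OUgen v) x) s :=
    fun x s hs => mehler_hasDerivAt hd0 (hd 1 (by norm_num)) (hcd 2 (by norm_num)) hbv
      (hdb 1 (by norm_num)) (hdb 2 (by norm_num)) x hs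
  have hML1 : ∀ (x s : ℝ), 0 < s →
      HasDerivAt (fun s => mehler s (OUgen v) x) (mehler s (OUgen (OUgen v)) x) s :=
    fun x s hs => mehler_hasDerivAt hdL1 hdP1 cP2 bL1 bP1 bP2 x hs
  have hML2 : ∀ (x s : ℝ), 0 < s →
      HasDerivAt (fun s => mehler s (OUgen (OUgen v)) x)
        (mehler s (OUgen (OUgen (OUgen v))) x) s :=
    fun x s hs => mehler_hasDerivAt hdL2 hdQ1 cQ2 bL2 bQ1 bQ2 x hs
  have Iv : ∀ s x : ℝ, Integrable (fun ξ : ℝ => v (Real.exp (-s / 2) * x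
      + Real.sqrt ((1 - Real.exp (-s)) / 2) * ξ) * Real.exp (-ξ ^ 2 / 2)) :=
    fun s x => mehler_comp_integrable hv.continuous hbv s x
  have IL1 : ∀ s x : ℝ, Integrable (fun ξ : ℝ => OUgen v (Real.exp (-s / 2) * x
      + Real.sqrt ((1 - Real.exp (-s)) / 2) * ξ) * Real.exp (-ξ ^ 2 / 2)) :=
    fun s x => mehler_comp_integrable cL1 bL1 s x
  have IL2 : ∀ s x : ℝ, Integrable (fun ξ : ℝ => OUgen (OUgen v) (Real.exp (-s / 2) * x
      + Real.sqrt ((1 - Real.exp (-s)) / 2) * ξ) * Real.exp (-ξ ^ 2 / 2)) :=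
    fun s x => mehler_comp_integrable cL2 bL2 s x
  have IL3 : ∀ s x : ℝ, Integrable (fun ξ : ℝ =>
      OUgen (OUgen (OUgen v)) (Real.exp (-s / 2) * x
      + Real.sqrt ((1 - Real.exp (-s)) / 2) * ξ) * Real.exp (-ξ ^ 2 / 2)) :=
    fun s x => mehler_comp_integrable cL3 bL3 s x
  have conj1 : ∀ x, 0 ≤ v x - t * OUgen v x + t ^ 2 / 2 * OUgen (OUgen v) x := by
    intro x
    have h1 := mul_le_mul_of_nonneg_left (hL1 x) ht.le
    have h2 := mul_le_mul_of_nonneg_left (hL2 x) (by positivity : (0:ℝ) ≤ t ^ 2 / 2)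
    have h4 : (t * A₁ + t ^ 2 / 2 * A₂) * v x ≤ 1 * v x :=
      mul_le_mul_of_nonneg_right htA (hpos x).le
    nlinarith
  refine ⟨conj1, ?_, ?_, ?_⟩
  · rw [integral_gaussMeasure]
    rw [integral_gaussMeasure] at hprob
    have hprob' : ∫ x : ℝ, v x * Real.exp (-x ^ 2) = 1 := by
      rw [show (fun x : ℝ => v x * Real.exp (-x ^ 2))
        = fun x : ℝ => Real.exp (-x ^ 2) * v x from funext fun x => by ring]
      exact hprob
    have hrw : (fun x : ℝ => Real.exp (-x ^ 2)
        * (v x - t * OUgen v x + t ^ 2 / 2 * OUgen (OUgen v) x))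
      = fun x : ℝ => (v x * Real.exp (-x ^ 2) - t * (OUgen v x * Real.exp (-x ^ 2)))
        + t ^ 2 / 2 * (OUgen (OUgen v) x * Real.exp (-x ^ 2)) := funext fun x => by ring
    have Ev : Integrable (fun x : ℝ => v x * Real.exp (-x ^ 2)) :=
      integrable_poly_gauss_one hv.continuous hbv
    have EL1 : Integrable (fun x : ℝ => OUgen v x * Real.exp (-x ^ 2)) :=
      integrable_poly_gauss_one cL1 bL1
    have EL2 : Integrable (fun x : ℝ => OUgen (OUgen v) x * Real.exp (-x ^ 2)) :=
      integrable_poly_gauss_one cL2 bL2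
    have hz1 : ∫ x : ℝ, OUgen v x * Real.exp (-x ^ 2) = 0 :=
      integral_OUgen_weight_zero hd0 (hd 1 (by norm_num)) (hcd 2 (by norm_num))
        (hdb 1 (by norm_num)) (hdb 2 (by norm_num))
    have hz2 : ∫ x : ℝ, OUgen (OUgen v) x * Real.exp (-x ^ 2) = 0 :=
      integral_OUgen_weight_zero hdL1 hdP1 cP2 bP1 bP2
    have hsub : Integrable (fun x : ℝ => v x * Real.exp (-x ^ 2)
        - t * (OUgen v x * Real.exp (-x ^ 2))) := Ev.sub (EL1.const_mul t)
    rw [hrw, MeasureTheory.integral_add hsub (EL2.const_mul _),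
      MeasureTheory.integral_sub Ev (EL1.const_mul t),
      MeasureTheory.integral_const_mul, MeasureTheory.integral_const_mul, hz1, hz2, hprob']
    ring
  · intro x
    have hMvcont : Continuous fun s => mehler s v x := mehler_continuous hv.continuous hbv x
    have hML1cont : Continuous fun s => mehler s (OUgen v) x := mehler_continuous cL1 bL1 x
    have hML2cont : Continuous fun s => mehler s (OUgen (OUgen v)) x :=
      mehler_continuous cL2 bL2 x
    have hGron : ∀ s : ℝ, 0 ≤ s → s ≤ t → mehler s v x ≤ Real.exp (s * A₁) * v x := by
      intro s hs0 hst
      rcases eq_or_lt_of_le hs0 with rfl | hs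
      · rw [mehler_zero_eq]
        simp
      · have hderiv : ∀ r ∈ Set.Ioo (0:ℝ) s, HasDerivAt
            (fun r => Real.exp (-r * A₁) * mehler r v x)
            (-A₁ * Real.exp (-r * A₁) * mehler r v x
              + Real.exp (-r * A₁) * mehler r (OUgen v) x) r := by
          intro r hr
          have h1 : HasDerivAt (fun r : ℝ => Real.exp (-r * A₁))
              (-A₁ * Real.exp (-r * A₁)) r := by
            have hin : HasDerivAt (fun r : ℝ => -r * A₁) (-A₁) r := by
              have := ((hasDerivAt_id' r).neg).mul_const A₁
              refine this.congr_deriv ?_; ring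
            have := hin.exp
            convert this using 1; ring
          have h := h1.mul (hMv x r hr.1)
          refine h.congr_deriv ?_; ring
        have hanti : AntitoneOn (fun r => Real.exp (-r * A₁) * mehler r v x)
            (Set.Icc 0 s) := by
          apply antitoneOn_of_deriv_nonpos (convex_Icc 0 s)
          · exact ((Real.continuous_exp.comp (by fun_prop)).mul hMvcont).continuousOn
          · rw [interior_Icc]
            exact fun r hr => ((hderiv r hr).differentiableAt).differentiableWithinAt
          · rw [interior_Icc]
            intro r hr
            rw [(hderiv r hr).deriv]
            have hm : mehler r (OUgen v) x ≤ A₁ * mehler r v x :=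
              mehler_le_const_mul A₁ r x (IL1 r x) (Iv r x) hL1
            nlinarith [Real.exp_pos (-r * A₁)]
        have h0s := hanti (Set.left_mem_Icc.mpr hs0) (Set.right_mem_Icc.mpr hs0) hs0
        simp only [neg_zero, zero_mul, Real.exp_zero, one_mul, mehler_zero_eq] at h0s
        have hep : 0 < Real.exp (-s * A₁) := Real.exp_pos _
        have hprod : Real.exp (-s * A₁) * Real.exp (s * A₁) = 1 := by
          rw [← Real.exp_add]
          norm_num
        calc mehler s v x = Real.exp (s * A₁) * (Real.exp (-s * A₁) * mehler s v x) := by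
              rw [← mul_assoc, mul_comm (Real.exp (s * A₁)) (Real.exp (-s * A₁)), hprod, one_mul]
          _ ≤ Real.exp (s * A₁) * v x := mul_le_mul_of_nonneg_left h0s (Real.exp_pos _).le
    have hΦderiv : ∀ s ∈ Set.Ioo (0:ℝ) t, HasDerivAt
        (fun s => mehler s v x - s * mehler s (OUgen v) x
          + s ^ 2 / 2 * mehler s (OUgen (OUgen v)) x
          + s ^ 3 / 6 * (A₃ * Real.exp (t * A₁) * v x))
        (s ^ 2 / 2 * mehler s (OUgen (OUgen (OUgen v))) x
          + s ^ 2 / 2 * (A₃ * Real.exp (t * A₁) * v x)) s := by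
      intro s hs
      have h1 := hMv x s hs.1
      have h2 := hML1 x s hs.1
      have h3 := hML2 x s hs.1
      have hB := (hasDerivAt_id' s).mul h2
      have hc2 : HasDerivAt (fun s : ℝ => s ^ 2 / 2) s s := by
        have := (hasDerivAt_pow 2 s).div_const 2
        refine this.congr_deriv ?_
        push_cast; ring
      have hCc := hc2.mul h3
      have hc3 : HasDerivAt (fun s : ℝ => s ^ 3 / 6) (s ^ 2 / 2) s := by
        have := (hasDerivAt_pow 3 s).div_const 6
        refine this.congr_deriv ?_
        push_cast; ring
      have hDd := hc3.mul_const (A₃ * Real.exp (t * A₁) * v x)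
      have h := ((h1.sub hB).add hCc).add hDd
      refine h.congr_deriv ?_
      ring
    have hΦcont : ContinuousOn (fun s => mehler s v x - s * mehler s (OUgen v) x
        + s ^ 2 / 2 * mehler s (OUgen (OUgen v)) x
        + s ^ 3 / 6 * (A₃ * Real.exp (t * A₁) * v x)) (Set.Icc 0 t) := by
      apply Continuous.continuousOn
      exact ((hMvcont.sub (continuous_id.mul hML1cont)).add
        (((continuous_pow 2).div_const 2).mul hML2cont)).add
        (((continuous_pow 3).div_const 6).mul continuous_const)
    have hmono := monotoneOn_of_deriv_nonneg (convex_Icc 0 t) hΦcont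
      (fun s hs => by
        rw [interior_Icc] at hs
        exact ((hΦderiv s hs).differentiableAt).differentiableWithinAt)
      (fun s hs => by
        rw [interior_Icc] at hs
        rw [(hΦderiv s hs).deriv]
        have hlow : -A₃ * mehler s v x ≤ mehler s (OUgen (OUgen (OUgen v))) x := by
          apply mehler_const_mul_le (-A₃) s x (Iv s x) (IL3 s x)
          intro y
          have h := (abs_le.mp (hL3 y)).1
          linarith
        have hup : mehler s v x ≤ Real.exp (s * A₁) * v x := hGron s hs.1.le hs.2.le
        have hee : Real.exp (s * A₁) ≤ Real.exp (t * A₁) :=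
          Real.exp_le_exp.mpr (mul_le_mul_of_nonneg_right hs.2.le hA₁)
        have hvp := (hpos x).le
        have hq : -A₃ * (Real.exp (t * A₁) * v x) ≤ mehler s (OUgen (OUgen (OUgen v))) x := by
          have step0 : mehler s v x ≤ Real.exp (t * A₁) * v x :=
            hup.trans (mul_le_mul_of_nonneg_right hee hvp)
          have step1 := mul_le_mul_of_nonpos_left step0 (neg_nonpos.mpr hA₃)
          linarith
        nlinarith [sq_nonneg s])
    have h0t := hmono (Set.left_mem_Icc.mpr ht.le) (Set.right_mem_Icc.mpr ht.le) ht.le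
    simp only [mehler_zero_eq] at h0t
    have hcomb := mehler_comb3 (f := v) (g := OUgen v) (h := OUgen (OUgen v))
      t (t ^ 2 / 2) t x (Iv t x) (IL1 t x) (IL2 t x)
    rw [hcomb]
    nlinarith [h0t]
  · intro x
    have htA1 : t * A₁ ≤ 1 := by nlinarith [mul_nonneg (sq_nonneg t) hA₂]
    have he : Real.exp (t * A₁) ≤ Real.exp 1 := Real.exp_le_exp.mpr htA1
    have he3 : Real.exp 1 ≤ 3 := by
      have := Real.exp_one_lt_d9
      linarith
    have key : t ^ 3 * A₃ * Real.exp (t * A₁) ≤ 3 := by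
      calc t ^ 3 * A₃ * Real.exp (t * A₁) ≤ 1 * 3 :=
        mul_le_mul htA3 (he.trans he3) (Real.exp_pos _).le (by norm_num)
      _ = 3 := by norm_num
    nlinarith [(hpos x).le, key]
end

section
/- Quantitative holomorphic Morse normal form: There is a universal constant c₀ > 0 with the following property. Let q ∈ ℂ, ε > 0, and let f be holomorphic on a neighborhood of the closed disc D_ε = { z : |z − q| ≤ ε }, with f′(q) = 0 and f″(q) ≠ 0. If ε ≤ c₀ |f″(q)| / sup_{D_ε} |f‴|, then there exists an injective holomorphic map φ : D_ε → ℂ with φ(q) = 0, φ′(q)² = f″(q), and f(z) = f(q) + (1/2) φ(z)² for all z ∈ D_ε; moreover |φ(z) − φ′(q)(z − q)| ≤ C |φ′(q)| |z − q|²/ε on D_ε for a universal constant C. -/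
open Complex Metric Set Filter Function Topology

set_option maxHeartbeats 1000000 in
/-- Quantitative holomorphic Morse normal form: there are universal constants
`c₀, C > 0` such that if `f` is holomorphic on a neighborhood of the closed disc
`D_ε = {|z − q| ≤ ε}` with `f′(q) = 0`, `f″(q) ≠ 0`, and
`ε ≤ c₀|f″(q)|/sup_{D_ε}|f‴|`, then there is an injective holomorphic `φ` on `D_ε`
with `φ(q) = 0`, `φ′(q)² = f″(q)`, `f(z) = f(q) + φ(z)²/2` on `D_ε`, and
`|φ(z) − φ′(q)(z − q)| ≤ C|φ′(q)||z − q|²/ε` on `D_ε`. -/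
theorem quantitative_morse_normal_form :
    ∃ c₀ > (0 : ℝ), ∃ C > (0 : ℝ),
      ∀ (f : ℂ → ℂ) (q : ℂ) (ε : ℝ), 0 < ε →
        ∀ U : Set ℂ, IsOpen U → Metric.closedBall q ε ⊆ U → DifferentiableOn ℂ f U →
        deriv f q = 0 → iteratedDeriv 2 f q ≠ 0 →
        ∀ M : ℝ, 0 < M →
          (∀ z ∈ Metric.closedBall q ε, ‖iteratedDeriv 3 f z‖ ≤ M) →
          ε ≤ c₀ * ‖iteratedDeriv 2 f q‖ / M →
          ∃ φ : ℂ → ℂ,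
            Set.InjOn φ (Metric.closedBall q ε) ∧
            DifferentiableOn ℂ φ (Metric.closedBall q ε) ∧
            φ q = 0 ∧
            (deriv φ q) ^ 2 = iteratedDeriv 2 f q ∧
            (∀ z ∈ Metric.closedBall q ε, f z = f q + (1 / 2) * (φ z) ^ 2) ∧
            (∀ z ∈ Metric.closedBall q ε,
              ‖φ z - deriv φ q * (z - q)‖ ≤ C * ‖deriv φ q‖ * ‖z - q‖ ^ 2 / ε) := by
  refine ⟨1/100, by norm_num, 1, by norm_num, ?_⟩
  intro f q ε hε U hU hcb hf hf1 hf2 M hM hM3 hεle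
  set a : ℂ := iteratedDeriv 2 f q with ha_def
  have haa : 0 < ‖a‖ := norm_pos_iff.mpr hf2
  have hqcb : q ∈ closedBall q ε := mem_closedBall_self hε.le
  have hqU : q ∈ U := hcb hqcb
  have hMε : M * ε ≤ (1/100) * ‖a‖ := by
    rw [le_div_iff₀ hM] at hεle; linarith
  -- analyticity and iterated derivatives
  have hfa : AnalyticOnNhd ℂ f U := hf.analyticOnNhd hU
  have hf1a : AnalyticOnNhd ℂ (deriv f) U := hfa.deriv
  have hf2a : AnalyticOnNhd ℂ (deriv (deriv f)) U := hf1a.deriv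
  have hF2q : deriv (deriv f) q = a := by
    rw [ha_def, iteratedDeriv_succ, iteratedDeriv_one]
  have hd3 : ∀ x ∈ U, HasDerivAt (deriv (deriv f)) (iteratedDeriv 3 f x) x := by
    intro x hx
    have h3 : iteratedDeriv 3 f = deriv (deriv (deriv f)) := by
      rw [iteratedDeriv_succ, iteratedDeriv_succ, iteratedDeriv_one]
    rw [h3]
    exact (hf2a x hx).differentiableAt.hasDerivAt
  have hconv : Convex ℝ (closedBall q ε) := convex_closedBall q ε
  have hseg : ∀ z ∈ closedBall q ε, segment ℝ q z ⊆ closedBall q ε := fun z hz =>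
    hconv.segment_subset hqcb hz
  have hsegnorm : ∀ z : ℂ, ∀ x ∈ segment ℝ q z, ‖x - q‖ ≤ ‖z - q‖ := by
    intro z x hx
    rw [segment_eq_image'] at hx
    obtain ⟨t, ht, rfl⟩ := hx
    rw [add_sub_cancel_left, norm_smul, Real.norm_eq_abs, _root_.abs_of_nonneg ht.1]
    nlinarith [norm_nonneg (z - q), ht.2]
  -- Taylor-type estimates via mean value inequality
  have A1 : ∀ w ∈ closedBall q ε, ‖deriv (deriv f) w - a‖ ≤ M * ‖w - q‖ := by
    intro w hw
    have := Convex.norm_image_sub_le_of_norm_hasDerivWithin_le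
      (f := deriv (deriv f)) (f' := iteratedDeriv 3 f) (s := segment ℝ q w) (C := M)
      (fun x hx => (hd3 x (hcb (hseg w hw hx))).hasDerivWithinAt)
      (fun x hx => hM3 x (hseg w hw hx)) (convex_segment q w)
      (left_mem_segment ℝ q w) (right_mem_segment ℝ q w)
    rwa [hF2q] at this
  have A2 : ∀ z ∈ closedBall q ε,
      ‖2 * deriv f z - 2 * a * (z - q)‖ ≤ 2 * M * ‖z - q‖ ^ 2 := by
    intro z hz
    have hder : ∀ x ∈ segment ℝ q z,
        HasDerivAt (fun y => 2 * deriv f y - 2 * a * (y - q))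
          (2 * deriv (deriv f) x - 2 * a) x := by
      intro x hx
      have h1 : HasDerivAt (deriv f) (deriv (deriv f) x) x :=
        (hf1a x (hcb (hseg z hz hx))).differentiableAt.hasDerivAt
      have h2 : HasDerivAt (fun y => 2 * a * (y - q)) (2 * a) x := by
        simpa using ((hasDerivAt_id x).sub_const q).const_mul (2 * a)
      exact (h1.const_mul 2).sub h2
    have hb : ∀ x ∈ segment ℝ q z,
        ‖2 * deriv (deriv f) x - 2 * a‖ ≤ 2 * M * ‖z - q‖ := by
      intro x hx
      have h1 : ‖2 * deriv (deriv f) x - 2 * a‖ = 2 * ‖deriv (deriv f) x - a‖ := by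
        rw [show (2 : ℂ) * deriv (deriv f) x - 2 * a = 2 * (deriv (deriv f) x - a) by ring,
          norm_mul]
        norm_num
      have h2 := A1 x (hseg z hz hx)
      have h3 := hsegnorm z x hx
      rw [h1]
      nlinarith
    have := Convex.norm_image_sub_le_of_norm_hasDerivWithin_le
      (s := segment ℝ q z)
      (fun x hx => (hder x hx).hasDerivWithinAt) hb (convex_segment q z)
      (left_mem_segment ℝ q z) (right_mem_segment ℝ q z)
    simp only [sub_self, mul_zero, sub_zero, hf1, mul_zero, sub_zero] at this
    calc ‖2 * deriv f z - 2 * a * (z - q)‖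
        ≤ 2 * M * ‖z - q‖ * ‖z - q‖ := by simpa using this
      _ = 2 * M * ‖z - q‖ ^ 2 := by ring
  have A3 : ∀ z ∈ closedBall q ε,
      ‖2 * (f z - f q) - a * (z - q) ^ 2‖ ≤ 2 * M * ‖z - q‖ ^ 3 := by
    intro z hz
    have hder : ∀ x ∈ segment ℝ q z,
        HasDerivAt (fun y => 2 * f y - a * (y - q) ^ 2)
          (2 * deriv f x - 2 * a * (x - q)) x := by
      intro x hx
      have h1 : HasDerivAt f (deriv f x) x :=
        (hf.differentiableAt (hU.mem_nhds (hcb (hseg z hz hx)))).hasDerivAt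
      have h2 : HasDerivAt (fun y => a * (y - q) ^ 2) (a * (2 * (x - q))) x := by
        have := (((hasDerivAt_id x).sub_const q).pow 2).const_mul a
        simpa using this
      have := (h1.const_mul 2).sub h2
      rw [show 2 * deriv f x - 2 * a * (x - q) = 2 * deriv f x - a * (2 * (x - q)) by ring]
      exact this
    have hb : ∀ x ∈ segment ℝ q z,
        ‖2 * deriv f x - 2 * a * (x - q)‖ ≤ 2 * M * ‖z - q‖ ^ 2 := by
      intro x hx
      have h2 := A2 x (hseg z hz hx)
      have h3 := hsegnorm z x hx
      have h4 : ‖x - q‖ ^ 2 ≤ ‖z - q‖ ^ 2 := pow_le_pow_left₀ (norm_nonneg _) h3 2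
      nlinarith [hM.le]
    have := Convex.norm_image_sub_le_of_norm_hasDerivWithin_le
      (s := segment ℝ q z)
      (fun x hx => (hder x hx).hasDerivWithinAt) hb (convex_segment q z)
      (left_mem_segment ℝ q z) (right_mem_segment ℝ q z)
    simp only [sub_self, mul_zero, sub_zero] at this
    calc ‖2 * (f z - f q) - a * (z - q) ^ 2‖
        = ‖(2 * f z - a * (z - q) ^ 2) - (2 * f q - a * 0 ^ 2)‖ := by
          congr 1; ring
      _ ≤ 2 * M * ‖z - q‖ ^ 2 * ‖z - q‖ := this
      _ = 2 * M * ‖z - q‖ ^ 3 := by ring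
  -- the holomorphic factor h with 2(f z - f q) = (z-q)^2 h z
  set g : ℂ → ℂ := fun z => 2 * (f z - f q) with hg_def
  set h : ℂ → ℂ := Function.update (fun z => g z / (z - q) ^ 2) q a with hh_def
  have hhq : h q = a := Function.update_self _ _ _
  have hh_ne : ∀ z : ℂ, z ≠ q → h z = g z / (z - q) ^ 2 := fun z hz =>
    Function.update_of_ne hz _ _
  have C1 : ∀ z ∈ closedBall q ε, ‖h z - a‖ ≤ 2 * M * ‖z - q‖ := by
    intro z hz
    rcases eq_or_ne z q with rfl | hzq
    · simp [hhq]
    · have hw : (z - q) ≠ 0 := sub_ne_zero.mpr hzq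
      have hwn : 0 < ‖z - q‖ := norm_pos_iff.mpr hw
      rw [hh_ne z hzq, show g z / (z - q) ^ 2 - a = (g z - a * (z - q) ^ 2) / (z - q) ^ 2 by
        field_simp, norm_div, norm_pow]
      rw [div_le_iff₀ (by positivity)]
      calc ‖g z - a * (z - q) ^ 2‖ ≤ 2 * M * ‖z - q‖ ^ 3 := A3 z hz
        _ = 2 * M * ‖z - q‖ * ‖z - q‖ ^ 2 := by ring
  have hcont : ContinuousAt h q := by
    rw [ContinuousAt, hhq, tendsto_iff_norm_sub_tendsto_zero]
    have hbnd : ∀ᶠ z in 𝓝 q, ‖h z - a‖ ≤ 2 * M * ‖z - q‖ :=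
      eventually_of_mem (closedBall_mem_nhds q hε) C1
    have hlim : Tendsto (fun z : ℂ => 2 * M * ‖z - q‖) (𝓝 q) (𝓝 0) := by
      have : Tendsto (fun z : ℂ => z - q) (𝓝 q) (𝓝 (q - q)) :=
        (continuous_sub_right q).tendsto q
      rw [sub_self] at this
      simpa using (this.norm.const_mul (2 * M))
    exact squeeze_zero_norm' (hbnd.mono fun z hz => by simpa using hz) hlim
  have hhd : DifferentiableOn ℂ h U := by
    rw [← Complex.differentiableOn_compl_singleton_and_continuousAt_iff (hU.mem_nhds hqU)]
    refine ⟨?_, hcont⟩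
    have : DifferentiableOn ℂ (fun z => g z / (z - q) ^ 2) (U \ {q}) := by
      apply DifferentiableOn.div
      · exact (((hf.mono diff_subset).sub_const (f q)).const_mul 2)
      · exact (((differentiableOn_id).sub_const q).pow 2)
      · intro z hz
        exact pow_ne_zero _ (sub_ne_zero.mpr hz.2)
    exact this.congr fun z hz => hh_ne z hz.2
  have hhda : ∀ z ∈ closedBall q ε, HasDerivAt h (deriv h z) z := fun z hz =>
    (hhd.differentiableAt (hU.mem_nhds (hcb hz))).hasDerivAt
  -- bound for deriv h away from q
  have hDh : ∀ z ∈ closedBall q ε, z ≠ q → ‖deriv h z‖ ≤ 6 * M := by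
    intro z hz hzq
    have hw : (z - q) ≠ 0 := sub_ne_zero.mpr hzq
    have hwn : 0 < ‖z - q‖ := norm_pos_iff.mpr hw
    have hg' : HasDerivAt g (2 * deriv f z) z := by
      have h1 : HasDerivAt f (deriv f z) z :=
        (hf.differentiableAt (hU.mem_nhds (hcb hz))).hasDerivAt
      simpa using (h1.sub_const (f q)).const_mul 2
    have hden : HasDerivAt (fun y => (y - q) ^ 2) (2 * (z - q)) z := by
      have := ((hasDerivAt_id z).sub_const q).pow 2
      simp at this; exact this
    have hquot : HasDerivAt (fun y => g y / (y - q) ^ 2)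
        ((2 * deriv f z * (z - q) ^ 2 - g z * (2 * (z - q))) / ((z - q) ^ 2) ^ 2) z :=
      hg'.div hden (pow_ne_zero _ hw)
    have hEq : h =ᶠ[𝓝 z] fun y => g y / (y - q) ^ 2 := by
      have : {q}ᶜ ∈ 𝓝 z := isOpen_compl_singleton.mem_nhds hzq
      exact eventually_of_mem this fun y hy => hh_ne y hy
    have hD : HasDerivAt h
        ((2 * deriv f z * (z - q) ^ 2 - g z * (2 * (z - q))) / ((z - q) ^ 2) ^ 2) z :=
      hquot.congr_of_eventuallyEq hEq
    rw [hD.deriv]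
    have hsplit : (2 * deriv f z * (z - q) ^ 2 - g z * (2 * (z - q))) / ((z - q) ^ 2) ^ 2
        = (2 * deriv f z - 2 * a * (z - q)) / (z - q) ^ 2
          - 2 * (g z - a * (z - q) ^ 2) / (z - q) ^ 3 := by
      field_simp
      ring
    rw [hsplit]
    have e1 : ‖(2 * deriv f z - 2 * a * (z - q)) / (z - q) ^ 2‖ ≤ 2 * M := by
      rw [norm_div, norm_pow, div_le_iff₀ (by positivity)]
      calc ‖2 * deriv f z - 2 * a * (z - q)‖ ≤ 2 * M * ‖z - q‖ ^ 2 := A2 z hz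
        _ = 2 * M * ‖z - q‖ ^ 2 := rfl
    have e2 : ‖2 * (g z - a * (z - q) ^ 2) / (z - q) ^ 3‖ ≤ 4 * M := by
      rw [norm_div, norm_pow, norm_mul, div_le_iff₀ (by positivity)]
      have h2 : ‖(2 : ℂ)‖ = 2 := by norm_num
      rw [h2]
      calc 2 * ‖g z - a * (z - q) ^ 2‖ ≤ 2 * (2 * M * ‖z - q‖ ^ 3) := by
            have := A3 z hz; linarith
        _ = 4 * M * ‖z - q‖ ^ 3 := by ring
    calc ‖_ - _‖ ≤ ‖(2 * deriv f z - 2 * a * (z - q)) / (z - q) ^ 2‖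
          + ‖2 * (g z - a * (z - q) ^ 2) / (z - q) ^ 3‖ := norm_sub_le _ _
      _ ≤ 2 * M + 4 * M := add_le_add e1 e2
      _ = 6 * M := by ring
  -- the square root b of a
  set b : ℂ := Complex.exp (Complex.log a / 2) with hb_def
  have hb2 : b ^ 2 = a := by
    rw [hb_def, sq, ← Complex.exp_add, add_halves, Complex.exp_log hf2]
  have hb0 : b ≠ 0 := Complex.exp_ne_zero _
  have hbn : 0 < ‖b‖ := norm_pos_iff.mpr hb0
  -- v, u, φ
  set v : ℂ → ℂ := fun z => h z / a with hv_def
  set u : ℂ → ℂ := fun z => Complex.exp (Complex.log (v z) / 2) with hu_def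
  set φ : ℂ → ℂ := fun z => b * ((z - q) * u z) with hφ_def
  have hvq : v q = 1 := by rw [hv_def]; simp [hhq, div_self hf2]
  have huq : u q = 1 := by rw [hu_def]; simp [hvq]
  have hv1 : ∀ z ∈ closedBall q ε, ‖v z - 1‖ ≤ ‖z - q‖ / (50 * ε) := by
    intro z hz
    have h1 : v z - 1 = (h z - a) / a := by
      simp only [hv_def]; field_simp
    rw [h1, norm_div, div_le_div_iff₀ haa (by positivity)]
    have h2 := C1 z hz
    have h3 : ‖z - q‖ ≤ ε := by simpa [dist_eq_norm] using hz
    nlinarith [norm_nonneg (z - q), norm_nonneg (h z - a)]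
  have hv2 : ∀ z ∈ closedBall q ε, ‖v z - 1‖ ≤ 1 / 50 := by
    intro z hz
    have h3 : ‖z - q‖ ≤ ε := by simpa [dist_eq_norm] using hz
    calc ‖v z - 1‖ ≤ ‖z - q‖ / (50 * ε) := hv1 z hz
      _ ≤ ε / (50 * ε) := by apply div_le_div_of_nonneg_right h3 (by positivity) |>.trans_eq rfl
      _ = 1 / 50 := by field_simp
  have hvre : ∀ z ∈ closedBall q ε, 0 < (v z).re := by
    intro z hz
    have h1 : |(v z - 1).re| ≤ ‖v z - 1‖ := by
      exact Complex.abs_re_le_norm _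
    have h2 := hv2 z hz
    have h3 : (v z).re = 1 + (v z - 1).re := by simp
    rw [h3]
    have := abs_le.mp h1
    linarith
  have hvslit : ∀ z ∈ closedBall q ε, v z ∈ Complex.slitPlane := fun z hz =>
    Or.inl (hvre z hz)
  have hv0 : ∀ z ∈ closedBall q ε, v z ≠ 0 := fun z hz =>
    Complex.slitPlane_ne_zero (hvslit z hz)
  have husq : ∀ z ∈ closedBall q ε, u z ^ 2 = v z := by
    intro z hz
    rw [hu_def, sq, ← Complex.exp_add, add_halves, Complex.exp_log (hv0 z hz)]
  have hvn_lb : ∀ z ∈ closedBall q ε, 49/50 ≤ ‖v z‖ := by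
    intro z hz
    have h1 := hv2 z hz
    have h2 : ‖v z‖ ≥ ‖(1 : ℂ)‖ - ‖v z - 1‖ := by
      have := norm_sub_norm_le (v z) 1
      have h4 := norm_sub_rev (v z) 1
      linarith [norm_sub_norm_le (1 : ℂ) (v z), (norm_sub_rev (v z) 1).le]
    simp only [norm_one] at h2
    linarith
  have hvn_ub : ∀ z ∈ closedBall q ε, ‖v z‖ ≤ 51/50 := by
    intro z hz
    have h1 := hv2 z hz
    calc ‖v z‖ ≤ ‖v z - 1‖ + ‖(1:ℂ)‖ := by
          simpa using norm_add_le (v z - 1) 1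
      _ ≤ 51/50 := by simp only [norm_one]; linarith
  have hun_ub : ∀ z ∈ closedBall q ε, ‖u z‖ ≤ 2 := by
    intro z hz
    have h1 : ‖u z‖ ^ 2 = ‖v z‖ := by rw [← norm_pow, husq z hz]
    nlinarith [norm_nonneg (u z), hvn_ub z hz]
  have hure : ∀ z ∈ closedBall q ε, 0 < (u z).re := by
    intro z hz
    rw [hu_def, Complex.exp_re]
    have harg : |(v z).arg| < Real.pi / 2 :=
      Complex.abs_arg_lt_pi_div_two_iff.mpr (Or.inl (hvre z hz))
    have him : (Complex.log (v z) / 2).im = (v z).arg / 2 := by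
      have : ((2 : ℂ)) = ((2 : ℝ) : ℂ) := by norm_num
      rw [this, Complex.div_ofReal_im, Complex.log_im]
    rw [him]
    have hcos : 0 < Real.cos ((v z).arg / 2) := by
      apply Real.cos_pos_of_mem_Ioo
      constructor
      · have := abs_lt.mp harg; linarith
      · have := abs_lt.mp harg; linarith
    positivity
  have hu1 : ∀ z ∈ closedBall q ε, ‖u z - 1‖ ≤ ‖v z - 1‖ := by
    intro z hz
    have hfac : (u z - 1) * (u z + 1) = v z - 1 := by
      have := husq z hz
      linear_combination this
    have h2 : ‖u z - 1‖ * ‖u z + 1‖ = ‖v z - 1‖ := by rw [← norm_mul, hfac]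
    have h3 : 1 ≤ ‖u z + 1‖ := by
      have h4 : (u z + 1).re ≤ ‖u z + 1‖ := by
        exact Complex.re_le_norm _
      have h5 : (u z + 1).re = (u z).re + 1 := by simp
      have := hure z hz
      linarith
    nlinarith [norm_nonneg (u z - 1)]
  -- the derivative of φ
  set D : ℂ → ℂ := fun z =>
    b * (1 * u z + (z - q) * (Complex.exp (Complex.log (v z) / 2)
      * ((v z)⁻¹ * (deriv h z / a) / 2))) with hD_def
  have hder : ∀ z ∈ closedBall q ε, HasDerivAt φ (D z) z := by
    intro z hz
    have hh' : HasDerivAt h (deriv h z) z := hhda z hz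
    have hv' : HasDerivAt v (deriv h z / a) z := hh'.div_const a
    have hlog : HasDerivAt (fun y => Complex.log (v y)) ((v z)⁻¹ * (deriv h z / a)) z :=
      (Complex.hasDerivAt_log (hvslit z hz)).comp z hv'
    have hhalf : HasDerivAt (fun y => Complex.log (v y) / 2)
        ((v z)⁻¹ * (deriv h z / a) / 2) z := hlog.div_const 2
    have hu' : HasDerivAt u (Complex.exp (Complex.log (v z) / 2)
        * ((v z)⁻¹ * (deriv h z / a) / 2)) z :=
      (Complex.hasDerivAt_exp _).comp z hhalf
    have hmul : HasDerivAt (fun y => (y - q) * u y)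
        (1 * u z + (z - q) * (Complex.exp (Complex.log (v z) / 2)
          * ((v z)⁻¹ * (deriv h z / a) / 2))) z :=
      ((hasDerivAt_id z).sub_const q).mul hu'
    exact hmul.const_mul b
  have hDq : D q = b := by
    rw [hD_def]
    simp [hvq, huq]
  have hderq : deriv φ q = b := by rw [(hder q hqcb).deriv, hDq]
  -- bound on ‖D z - b‖
  have hDb : ∀ z ∈ closedBall q ε, ‖D z - b‖ ≤ ‖b‖ / 2 := by
    intro z hz
    have hexp_u : Complex.exp (Complex.log (v z) / 2) = u z := rfl
    have hsplit : D z - b = b * ((u z - 1) + (z - q) * (u z * ((v z)⁻¹ * (deriv h z / a) / 2))) := by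
      simp only [hD_def, hexp_u]; ring
    rw [hsplit, norm_mul]
    have hub : ‖(u z - 1) + (z - q) * (u z * ((v z)⁻¹ * (deriv h z / a) / 2))‖ ≤ 1/2 := by
      rcases eq_or_ne z q with rfl | hzq
      · simp [huq]
      · have h3 : ‖z - q‖ ≤ ε := by simpa [dist_eq_norm] using hz
        have hu1' : ‖u z - 1‖ ≤ 1/50 := (hu1 z hz).trans (hv2 z hz)
        have hvinv : ‖(v z)⁻¹‖ ≤ 50/49 := by
          rw [norm_inv]
          rw [inv_le_comm₀ (lt_of_lt_of_le (by norm_num) (hvn_lb z hz)) (by norm_num)]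
          exact le_trans (by norm_num) (hvn_lb z hz)
        have hDh' : ‖deriv h z / a‖ ≤ 6 * M / ‖a‖ := by
          rw [norm_div]
          exact (div_le_div_iff_of_pos_right haa).mpr (hDh z hz hzq)
        have hterm : ‖(z - q) * (u z * ((v z)⁻¹ * (deriv h z / a) / 2))‖ ≤ 3/49 := by
          rw [norm_mul, norm_mul, norm_div, norm_mul]
          have h2n : ‖(2:ℂ)‖ = 2 := by norm_num
          rw [h2n]
          have hMa : ε * (6 * M / ‖a‖) ≤ 6 / 100 := by
            rw [show ε * (6 * M / ‖a‖) = 6 * (M * ε) / ‖a‖ by ring, div_le_iff₀ haa]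
            nlinarith
          have e1 : ‖(v z)⁻¹‖ * ‖deriv h z / a‖ ≤ (50/49) * (6 * M / ‖a‖) := by
            apply mul_le_mul hvinv hDh' (norm_nonneg _) (by norm_num)
          have e2 : ‖u z‖ * (‖(v z)⁻¹‖ * ‖deriv h z / a‖ / 2) ≤ (50/49) * (6 * M / ‖a‖) := by
            have h6 : 0 ≤ 6 * M / ‖a‖ := by positivity
            calc ‖u z‖ * (‖(v z)⁻¹‖ * ‖deriv h z / a‖ / 2)
                ≤ 2 * ((50/49) * (6 * M / ‖a‖) / 2) := by
                  apply mul_le_mul (hun_ub z hz) (by linarith) (by positivity) (by norm_num)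
              _ = (50/49) * (6 * M / ‖a‖) := by ring
          calc ‖z - q‖ * (‖u z‖ * (‖(v z)⁻¹‖ * ‖deriv h z / a‖ / 2))
              ≤ ε * ((50/49) * (6 * M / ‖a‖)) := by
                apply mul_le_mul h3 e2 (by positivity) hε.le
            _ = (50/49) * (ε * (6 * M / ‖a‖)) := by ring
            _ ≤ (50/49) * (6/100) := by
                apply mul_le_mul_of_nonneg_left hMa (by norm_num)
            _ = 3/49 := by norm_num
        calc ‖(u z - 1) + (z - q) * (u z * ((v z)⁻¹ * (deriv h z / a) / 2))‖
            ≤ ‖u z - 1‖ + ‖(z - q) * (u z * ((v z)⁻¹ * (deriv h z / a) / 2))‖ :=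
              norm_add_le _ _
          _ ≤ 1/50 + 3/49 := add_le_add hu1' hterm
          _ ≤ 1/2 := by norm_num
    calc ‖b‖ * ‖(u z - 1) + (z - q) * (u z * ((v z)⁻¹ * (deriv h z / a) / 2))‖
        ≤ ‖b‖ * (1/2) := mul_le_mul_of_nonneg_left hub (norm_nonneg b)
      _ = ‖b‖ / 2 := by ring
  -- injectivity via MVT
  have hinj : Set.InjOn φ (closedBall q ε) := by
    intro z hz w hw hzw
    by_contra hne
    have hψ : ∀ x ∈ closedBall q ε,
        HasDerivWithinAt (fun y => φ y - b * y) (D x - b) (closedBall q ε) x := by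
      intro x hx
      have h1 : HasDerivAt (fun y => b * y) b x := by
        simpa using (hasDerivAt_id x).const_mul b
      exact ((hder x hx).sub h1).hasDerivWithinAt
    have hMVT := Convex.norm_image_sub_le_of_norm_hasDerivWithin_le
      (s := closedBall q ε) hψ (fun x hx => hDb x hx) hconv hw hz
    have heq : (φ z - b * z) - (φ w - b * w) = -(b * (z - w)) := by
      rw [hzw]; ring
    rw [heq, norm_neg, norm_mul] at hMVT
    have hzw' : 0 < ‖z - w‖ := norm_pos_iff.mpr (sub_ne_zero.mpr hne)
    nlinarith
  -- square identity
  have hsq_id : ∀ z ∈ closedBall q ε, φ z ^ 2 = 2 * (f z - f q) := by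
    intro z hz
    have h1 : (z - q) ^ 2 * h z = g z := by
      rcases eq_or_ne z q with rfl | hzq
      · simp [hg_def]
      · rw [hh_ne z hzq]
        rw [mul_div_assoc']
        exact mul_div_cancel_left₀ _ (pow_ne_zero 2 (sub_ne_zero.mpr hzq))
    have h2 : φ z ^ 2 = a * ((z - q) ^ 2 * v z) := by
      rw [hφ_def]
      have : (b * ((z - q) * u z)) ^ 2 = b ^ 2 * ((z - q) ^ 2 * u z ^ 2) := by ring
      rw [this, hb2, husq z hz]
    rw [h2, hv_def]
    simp only
    rw [show a * ((z - q) ^ 2 * (h z / a)) = (z - q) ^ 2 * h z by field_simp, h1]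
  refine ⟨φ, hinj, fun z hz => ((hder z hz).differentiableAt).differentiableWithinAt,
    by simp [hφ_def], by rw [hderq, hb2], ?_, ?_⟩
  · intro z hz
    have := hsq_id z hz
    rw [this]; ring
  · intro z hz
    rw [hderq]
    have h1 : φ z - b * (z - q) = b * (z - q) * (u z - 1) := by rw [hφ_def]; ring
    rw [h1, norm_mul, norm_mul]
    have h2 := (hu1 z hz).trans (hv1 z hz)
    calc ‖b‖ * ‖z - q‖ * ‖u z - 1‖ ≤ ‖b‖ * ‖z - q‖ * (‖z - q‖ / (50 * ε)) := by
          apply mul_le_mul_of_nonneg_left h2 (by positivity)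
      _ ≤ 1 * ‖b‖ * ‖z - q‖ ^ 2 / ε := by
          have hX : 0 ≤ ‖b‖ * ‖z - q‖ ^ 2 / ε := by positivity
          have h50 : ‖b‖ * ‖z - q‖ * (‖z - q‖ / (50 * ε)) = ‖b‖ * ‖z - q‖ ^ 2 / ε / 50 := by
            field_simp
          rw [h50, one_mul]
          linarith
end

section
/- Inclusion–exclusion identity for small gaps: Let x₁ < x₂ < ⋯ < x_N be real numbers and δ > 0. Then #{ j ∈ {1,…,N−1} : x_{j+1} − x_j ≤ δ } = Σ_{m=2}^{N} (−1)^m · #{ S ⊆ {1,…,N} : |S| = m and max_{i,j ∈ S} |x_i − x_j| ≤ δ }, i.e. the number of consecutive gaps of size at most δ equals the alternating sum over m of the number of m-element subsets of diameter at most δ. -/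
open scoped BigOperators

open Finset

/-- Inclusion–exclusion identity for small gaps: for strictly increasing reals
`x₁ < ⋯ < x_N` and `δ > 0`, the number of consecutive gaps of size at most `δ`
equals the alternating sum over `m` of the number of `m`-element subsets of
diameter at most `δ`. -/
theorem inclusion_exclusion_small_gaps (N : ℕ) (x : Fin N → ℝ) (hx : StrictMono x)
    (δ : ℝ) (hδ : 0 < δ) :
    (Nat.card {j : ℕ // ∃ h : j + 1 < N,
        x ⟨j + 1, h⟩ - x ⟨j, by omega⟩ ≤ δ} : ℤ)
      = ∑ m ∈ Finset.Icc 2 N, (-1 : ℤ) ^ m *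
          (Nat.card {S : Finset (Fin N) //
            S.card = m ∧ ∀ i ∈ S, ∀ j ∈ S, |x i - x j| ≤ δ} : ℤ) := by
  classical
  have hmono := hx.monotone
  -- the finset of "small gap" indices
  set G : Finset ℕ := (Finset.range N).filter
      (fun j => ∃ h : j + 1 < N, x ⟨j + 1, h⟩ - x ⟨j, by omega⟩ ≤ δ) with hGdef
  -- LHS as a finset card
  have hLHS : Nat.card {j : ℕ // ∃ h : j + 1 < N,
      x ⟨j + 1, h⟩ - x ⟨j, by omega⟩ ≤ δ} = G.card := by
    have e : {j : ℕ // ∃ h : j + 1 < N, x ⟨j + 1, h⟩ - x ⟨j, by omega⟩ ≤ δ}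
        ≃ {j : ℕ // j ∈ G} := by
      refine Equiv.subtypeEquivRight fun j => ?_
      simp only [hGdef, Finset.mem_filter, Finset.mem_range]
      constructor
      · rintro ⟨h, hle⟩; exact ⟨by omega, h, hle⟩
      · rintro ⟨_, h, hle⟩; exact ⟨h, hle⟩
    rw [Nat.card_congr e, Nat.card_eq_finsetCard]
  -- diameter predicate
  set D : Finset (Fin N) → Prop := fun S => ∀ i ∈ S, ∀ j ∈ S, |x i - x j| ≤ δ with hDdef
  set A : ℕ → Finset (Finset (Fin N)) :=
      fun m => Finset.univ.filter (fun S => S.card = m ∧ D S) with hAdef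
  have hRHS : ∀ m, Nat.card {S : Finset (Fin N) //
      S.card = m ∧ ∀ i ∈ S, ∀ j ∈ S, |x i - x j| ≤ δ} = (A m).card := by
    intro m
    have e : {S : Finset (Fin N) // S.card = m ∧ ∀ i ∈ S, ∀ j ∈ S, |x i - x j| ≤ δ}
        ≃ {S : Finset (Fin N) // S ∈ A m} := by
      refine Equiv.subtypeEquivRight fun S => ?_
      simp [hAdef, hDdef]
    rw [Nat.card_congr e, Nat.card_eq_finsetCard]
  rw [hLHS]
  simp only [hRHS]
  -- the collection of all small-diameter sets of size ≥ 2
  set B : Finset (Finset (Fin N)) :=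
      Finset.univ.filter (fun S => 2 ≤ S.card ∧ D S) with hBdef
  have hmaps : ∀ S ∈ B, S.card ∈ Finset.Icc 2 N := by
    intro S hS
    rw [hBdef, Finset.mem_filter] at hS
    refine Finset.mem_Icc.2 ⟨hS.2.1, ?_⟩
    simpa using S.card_le_univ
  have step1 : ∑ m ∈ Finset.Icc 2 N, (-1 : ℤ) ^ m * ((A m).card : ℤ)
      = ∑ S ∈ B, (-1 : ℤ) ^ S.card := by
    rw [← Finset.sum_fiberwise_of_maps_to hmaps (fun S => (-1 : ℤ) ^ S.card)]
    refine Finset.sum_congr rfl fun m hm => ?_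
    have hm2 : 2 ≤ m := (Finset.mem_Icc.1 hm).1
    have hfib : B.filter (fun S => S.card = m) = A m := by
      ext S
      simp only [hBdef, hAdef, Finset.mem_filter, Finset.mem_univ, true_and]
      constructor
      · rintro ⟨⟨_, hD⟩, hc⟩; exact ⟨hc, hD⟩
      · rintro ⟨hc, hD⟩; exact ⟨⟨hc ▸ hm2, hD⟩, hc⟩
    rw [hfib]
    have hcst : ∑ S ∈ A m, (-1 : ℤ) ^ S.card = ∑ _S ∈ A m, (-1 : ℤ) ^ m := by
      refine Finset.sum_congr rfl fun S hS => ?_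
      simp only [hAdef, Finset.mem_filter] at hS
      rw [hS.2.1]
    rw [hcst, Finset.sum_const, nsmul_eq_mul, mul_comm]
  rw [step1]
  -- pairs (a, b) with a < b and x b - x a ≤ δ
  set T : Finset (Fin N × Fin N) :=
      Finset.univ.filter (fun p => p.1 < p.2 ∧ x p.2 - x p.1 ≤ δ) with hTdef
  set Sig : Finset ((_ : Fin N × Fin N) × Finset (Fin N)) :=
      T.sigma (fun p => (Finset.Ioo p.1 p.2).powerset) with hSigdef
  -- bijection between Sig and B
  have step2 : ∑ S ∈ B, (-1 : ℤ) ^ S.card = ∑ q ∈ Sig, (-1 : ℤ) ^ q.2.card := by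
    refine (Finset.sum_bij (fun q _ => insert q.1.1 (insert q.1.2 q.2)) ?_ ?_ ?_ ?_).symm
    · -- maps into B
      rintro ⟨⟨a, b⟩, t⟩ hq
      rw [hSigdef, Finset.mem_sigma, hTdef, Finset.mem_filter, Finset.mem_powerset] at hq
      obtain ⟨⟨-, hab, hxab⟩, ht⟩ := hq
      have hbt : b ∉ t := fun hb => by simpa using (ht hb)
      have hat : a ∉ insert b t := by
        simp only [Finset.mem_insert]
        rintro (rfl | ha)
        · exact absurd rfl hab.ne
        · simpa using (Finset.mem_Ioo.1 (ht ha)).1.ne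
      rw [hBdef, Finset.mem_filter]
      refine ⟨Finset.mem_univ _, ?_, ?_⟩
      · rw [Finset.card_insert_of_notMem hat, Finset.card_insert_of_notMem hbt]; omega
      · intro i hi j hj
        have hrange : ∀ k ∈ insert a (insert b t), a ≤ k ∧ k ≤ b := by
          intro k hk
          simp only [Finset.mem_insert] at hk
          rcases hk with rfl | rfl | hk
          · exact ⟨le_rfl, hab.le⟩
          · exact ⟨hab.le, le_rfl⟩
          · have := Finset.mem_Ioo.1 (ht hk); exact ⟨this.1.le, this.2.le⟩
        obtain ⟨hai, hib⟩ := hrange i hi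
        obtain ⟨haj, hjb⟩ := hrange j hj
        rw [abs_sub_le_iff]
        exact ⟨le_trans (sub_le_sub (hmono hib) (hmono haj)) hxab,
          le_trans (sub_le_sub (hmono hjb) (hmono hai)) hxab⟩
    · -- injective
      rintro ⟨⟨a, b⟩, t⟩ hq ⟨⟨a', b'⟩, t'⟩ hq' heq
      rw [hSigdef, Finset.mem_sigma, hTdef, Finset.mem_filter, Finset.mem_powerset] at hq hq'
      obtain ⟨⟨-, hab, -⟩, ht⟩ := hq
      obtain ⟨⟨-, hab', -⟩, ht'⟩ := hq'
      have heq' : insert a (insert b t) = insert a' (insert b' t') := heq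
      have minmax : ∀ (a b : Fin N) (t : Finset (Fin N)), a < b → t ⊆ Finset.Ioo a b →
          ∀ k ∈ insert a (insert b t), a ≤ k ∧ k ≤ b := by
        intro a b t hab ht k hk
        simp only [Finset.mem_insert] at hk
        rcases hk with rfl | rfl | hk
        · exact ⟨le_rfl, hab.le⟩
        · exact ⟨hab.le, le_rfl⟩
        · have := Finset.mem_Ioo.1 (ht hk); exact ⟨this.1.le, this.2.le⟩
      have ha : a = a' := by
        have h1 : a ∈ insert a' (insert b' t') := heq' ▸ Finset.mem_insert_self _ _
        have h2 : a' ∈ insert a (insert b t) := heq' ▸ Finset.mem_insert_self _ _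
        exact le_antisymm (minmax a b t hab ht a' h2).1 (minmax a' b' t' hab' ht' a h1).1
      have hb : b = b' := by
        have h1 : b ∈ insert a' (insert b' t') := heq' ▸ (Finset.mem_insert_of_mem
          (Finset.mem_insert_self _ _))
        have h2 : b' ∈ insert a (insert b t) := heq' ▸ (Finset.mem_insert_of_mem
          (Finset.mem_insert_self _ _))
        exact le_antisymm (minmax a' b' t' hab' ht' b h1).2 (minmax a b t hab ht b' h2).2
      subst ha; subst hb
      have hbt : b ∉ t := fun hb => by simpa using (ht hb)
      have hbt' : b ∉ t' := fun hb => by simpa using (ht' hb)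
      have hat : a ∉ insert b t := by
        simp only [Finset.mem_insert]
        rintro (rfl | h3)
        · exact absurd rfl hab.ne
        · simpa using (Finset.mem_Ioo.1 (ht h3)).1.ne
      have hat' : a ∉ insert b t' := by
        simp only [Finset.mem_insert]
        rintro (rfl | h3)
        · exact absurd rfl hab.ne
        · simpa using (Finset.mem_Ioo.1 (ht' h3)).1.ne
      have : t = t' := by
        have e1 := congrArg (fun s => (s.erase a).erase b) heq
        simpa [Finset.erase_insert hat, Finset.erase_insert hat',
          Finset.erase_insert hbt, Finset.erase_insert hbt'] using e1
      simp [this]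
    · -- surjective
      intro S hS
      rw [hBdef, Finset.mem_filter] at hS
      obtain ⟨-, hc, hD⟩ := hS
      have hne : S.Nonempty := Finset.card_pos.1 (by omega)
      set a := S.min' hne with hadef
      set b := S.max' hne with hbdef
      have hab : a < b := S.min'_lt_max'_of_card (by omega)
      have haS : a ∈ S := S.min'_mem hne
      have hbS : b ∈ S := S.max'_mem hne
      have hxab : x b - x a ≤ δ := by
        have := hD b hbS a haS
        rwa [abs_of_nonneg (by linarith [(hmono hab.le : x a ≤ x b)])] at this
      refine ⟨⟨(a, b), (S.erase a).erase b⟩, ?_, ?_⟩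
      · rw [hSigdef, Finset.mem_sigma, hTdef, Finset.mem_filter, Finset.mem_powerset]
        refine ⟨⟨Finset.mem_univ _, hab, hxab⟩, ?_⟩
        intro y hy
        simp only [Finset.mem_erase] at hy
        obtain ⟨hyb, hya, hyS⟩ := hy
        exact Finset.mem_Ioo.2 ⟨lt_of_le_of_ne (S.min'_le y hyS) (Ne.symm hya),
          lt_of_le_of_ne (S.le_max' y hyS) hyb⟩
      · have hbe : b ∈ S.erase a := Finset.mem_erase.2 ⟨hab.ne', hbS⟩
        simp only []
        rw [Finset.insert_erase hbe, Finset.insert_erase haS]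
    · -- values agree
      rintro ⟨⟨a, b⟩, t⟩ hq
      rw [hSigdef, Finset.mem_sigma, hTdef, Finset.mem_filter, Finset.mem_powerset] at hq
      obtain ⟨⟨-, hab, -⟩, ht⟩ := hq
      have hbt : b ∉ t := fun hb => by simpa using (ht hb)
      have hat : a ∉ insert b t := by
        simp only [Finset.mem_insert]
        rintro (rfl | h3)
        · exact absurd rfl hab.ne
        · simpa using (Finset.mem_Ioo.1 (ht h3)).1.ne
      rw [Finset.card_insert_of_notMem hat, Finset.card_insert_of_notMem hbt]
      ring
  rw [step2, hSigdef, Finset.sum_sigma]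
  have step3 : ∑ p ∈ T, ∑ t ∈ (Finset.Ioo p.1 p.2).powerset, (-1 : ℤ) ^ t.card
      = ∑ p ∈ T, (if Finset.Ioo p.1 p.2 = ∅ then (1 : ℤ) else 0) := by
    refine Finset.sum_congr rfl fun p _ => ?_
    exact Finset.sum_powerset_neg_one_pow_card
  rw [step3, Finset.sum_boole]
  -- final bijection with G
  have step4 : (T.filter (fun p => Finset.Ioo p.1 p.2 = ∅)).card = G.card := by
    refine Finset.card_bij (fun p _ => (p.1.1 : ℕ)) ?_ ?_ ?_
    · rintro ⟨a, b⟩ hp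
      rw [Finset.mem_filter, hTdef, Finset.mem_filter] at hp
      dsimp only at hp ⊢
      obtain ⟨⟨-, hab, hxab⟩, hIoo⟩ := hp
      have hb : (b : ℕ) = (a : ℕ) + 1 := by
        by_contra hne
        have hlt : (a : ℕ) + 1 < (b : ℕ) := by
          have := (Fin.lt_iff_val_lt_val.1 hab); omega
        have : (⟨(a : ℕ) + 1, lt_trans hlt b.isLt⟩ : Fin N) ∈ Finset.Ioo a b := by
          rw [Finset.mem_Ioo]
          constructor
          · rw [Fin.lt_iff_val_lt_val]; simp
          · rw [Fin.lt_iff_val_lt_val]; simpa using hlt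
        rw [hIoo] at this; simp at this
      rw [hGdef, Finset.mem_filter, Finset.mem_range]
      have hlt : (a : ℕ) + 1 < N := hb ▸ b.isLt
      refine ⟨by omega, hlt, ?_⟩
      have hb2 : (⟨(a : ℕ) + 1, hlt⟩ : Fin N) = b := by
        apply Fin.ext; simp [hb]
      have ha2 : (⟨(a : ℕ), by omega⟩ : Fin N) = a := by apply Fin.ext; simp
      rw [hb2, ha2]; exact hxab
    · rintro ⟨a, b⟩ hp ⟨a', b'⟩ hp' heq
      rw [Finset.mem_filter, hTdef, Finset.mem_filter] at hp hp'
      dsimp only at hp hp' heq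
      obtain ⟨⟨-, hab, -⟩, hIoo⟩ := hp
      obtain ⟨⟨-, hab', -⟩, hIoo'⟩ := hp'
      have hb : (b : ℕ) = (a : ℕ) + 1 := by
        by_contra hne
        have hlt : (a : ℕ) + 1 < (b : ℕ) := by
          have := (Fin.lt_iff_val_lt_val.1 hab); omega
        have : (⟨(a : ℕ) + 1, lt_trans hlt b.isLt⟩ : Fin N) ∈ Finset.Ioo a b := by
          rw [Finset.mem_Ioo]
          exact ⟨Fin.lt_iff_val_lt_val.2 (by simp), Fin.lt_iff_val_lt_val.2 (by simpa using hlt)⟩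
        rw [hIoo] at this; simp at this
      have hb' : (b' : ℕ) = (a' : ℕ) + 1 := by
        by_contra hne
        have hlt : (a' : ℕ) + 1 < (b' : ℕ) := by
          have := (Fin.lt_iff_val_lt_val.1 hab'); omega
        have : (⟨(a' : ℕ) + 1, lt_trans hlt b'.isLt⟩ : Fin N) ∈ Finset.Ioo a' b' := by
          rw [Finset.mem_Ioo]
          exact ⟨Fin.lt_iff_val_lt_val.2 (by simp), Fin.lt_iff_val_lt_val.2 (by simpa using hlt)⟩
        rw [hIoo'] at this; simp at this
      have haa : a = a' := Fin.ext heq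
      have hbb : b = b' := Fin.ext (by omega)
      simp [haa, hbb]
    · intro j hj
      rw [hGdef, Finset.mem_filter, Finset.mem_range] at hj
      obtain ⟨hjN, h, hle⟩ := hj
      refine ⟨(⟨j, by omega⟩, ⟨j + 1, h⟩), ?_, rfl⟩
      rw [Finset.mem_filter, hTdef, Finset.mem_filter]
      refine ⟨⟨Finset.mem_univ _, Fin.lt_iff_val_lt_val.2 (by simp), hle⟩, ?_⟩
      rw [Finset.eq_empty_iff_forall_notMem]
      intro c hc
      rw [Finset.mem_Ioo, Fin.lt_iff_val_lt_val, Fin.lt_iff_val_lt_val] at hc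
      simp at hc; omega
  rw [step4]
end
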